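/- arXiv:2101.03404 — 5 statements merged into one kernel-verified Lean document; each statement's English description precedes it below -/
import Mathlib

section
/- Let G be a profinite group. The intersection, over all finite quotients Q of G by open normal subgroups and all chief factors A/B of Q, of the preimages in G of the centralizers C_Q(A/B), is the largest closed normal pronilpotent subgroup F(G) of G; in particular a largest closed normal pronilpotent subgroup exists and equals this intersection. -/
open scoped commutatorElement

/-- Iterated left-normed commutator: `commIter g x n = [g, x, x, ..., x]` with `n` copies of `x`. -/
def commIter {G : Type*} [Group G] (g x : G) : ℕ → G
  | 0 => g
  | n + 1 => ⁅commIter g x n, x⁆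

/-- `R` is a right Engel sink of `g`. -/
def IsRightEngelSink {G : Type*} [Group G] (g : G) (R : Set G) : Prop :=
  ∀ x : G, ∃ n₀ : ℕ, 0 < n₀ ∧ ∀ n, n₀ ≤ n → commIter g x n ∈ R

/-- `E` is a left Engel sink of `g`. -/
def IsLeftEngelSink {G : Type*} [Group G] (g : G) (E : Set G) : Prop :=
  ∀ x : G, ∃ n₀ : ℕ, 0 < n₀ ∧ ∀ n, n₀ ≤ n → commIter x g n ∈ E

/-- A group is locally nilpotent if every finitely generated subgroup is nilpotent. -/
def IsLocallyNilpotent (G : Type*) [Group G] : Prop :=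
  ∀ S : Finset G, Group.IsNilpotent ↥(Subgroup.closure (S : Set G))

/-- A topological group is pronilpotent if every quotient by an open normal subgroup
is nilpotent. -/
def IsPronilpotent (G : Type*) [Group G] [TopologicalSpace G] : Prop :=
  ∀ (N : Subgroup G) (hN : N.Normal), IsOpen (N : Set G) →
    (haveI := hN; Group.IsNilpotent (G ⧸ N))

/-- All quotients of `G` by open normal subgroups have order coprime to `k`;
this is the coprimality condition for an automorphism of order `k` of `G`. -/
def QuotientsCoprimeTo (G : Type*) [Group G] [TopologicalSpace G] (k : ℕ) : Prop :=
  ∀ N : Subgroup G, N.Normal → IsOpen (N : Set G) → Nat.Coprime N.index k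

/-- `F` is the largest closed normal pronilpotent subgroup of `G`
(the pronilpotent radical `F(G)`). -/
def IsPronilpotentRadical (G : Type*) [Group G] [TopologicalSpace G] (F : Subgroup G) : Prop :=
  IsClosed (F : Set G) ∧ F.Normal ∧ IsPronilpotent ↥F ∧
    ∀ K : Subgroup G, IsClosed (K : Set G) → K.Normal → IsPronilpotent ↥K → K ≤ F

/-- `F2` is the second term of the pronilpotent series: the preimage in `G` of the
pronilpotent radical of `G ⧸ F`. -/
def IsSecondRadical (G : Type*) [Group G] [TopologicalSpace G] (F : Subgroup G) [F.Normal]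
    (F2 : Subgroup G) : Prop :=
  ∃ Fq : Subgroup (G ⧸ F), IsPronilpotentRadical (G ⧸ F) Fq ∧
    F2 = Fq.comap (QuotientGroup.mk' F)

/-- The Frattini subgroup of a topological group: the intersection of all maximal
open subgroups. -/
def frattiniOpen (G : Type*) [Group G] [TopologicalSpace G] : Subgroup G :=
  ⨅ (M : Subgroup G) (_ : IsOpen (M : Set G) ∧ IsCoatom M), M

/-- `γ_∞(G)`: the intersection of the closures of the lower central series. -/
def gammaInf (G : Type*) [Group G] [TopologicalSpace G] [IsTopologicalGroup G] : Subgroup G :=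
  ⨅ n : ℕ, ((⊤ : Subgroup G).lowerCentralSeries n).topologicalClosure

/-- `g` is a `p`-element: the closed subgroup it topologically generates is pro-`p`. -/
def IsPElement {G : Type*} [Group G] [TopologicalSpace G] [IsTopologicalGroup G]
    (p : ℕ) (g : G) : Prop :=
  ∀ M : Subgroup ↥((Subgroup.closure {g}).topologicalClosure),
    M.Normal → IsOpen (M : Set ↥((Subgroup.closure {g}).topologicalClosure)) →
      ∃ k : ℕ, M.index = p ^ k

/-- `K` is the Hall `p'`-subgroup of the pronilpotent group `F`: the largest closed
subgroup normal in `F` all of whose finite quotients have order coprime to `p`. -/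
def IsHallPComplement (G : Type*) [Group G] [TopologicalSpace G] (p : ℕ)
    (F K : Subgroup G) : Prop :=
  K ≤ F ∧ IsClosed (K : Set G) ∧ (K.subgroupOf F).Normal ∧ QuotientsCoprimeTo ↥K p ∧
    ∀ K' : Subgroup G, K' ≤ F → IsClosed (K' : Set G) → (K'.subgroupOf F).Normal →
      QuotientsCoprimeTo ↥K' p → K' ≤ K
/-- The intersection, over all finite quotients `Q = G ⧸ N` of `G` by open normal
subgroups `N` and all chief factors `A/B` of `Q`, of the preimages in `G` of the
centralizers `C_Q(A/B)`. -/
def chiefCentralizersIntersection (G : Type*) [Group G] [TopologicalSpace G] : Set G :=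
  {g : G | ∀ (N : Subgroup G) (hN : N.Normal), IsOpen (N : Set G) →
    (haveI := hN;
      ∀ A B : Subgroup (G ⧸ N), A.Normal → B.Normal → B < A →
        (∀ K : Subgroup (G ⧸ N), K.Normal → B ≤ K → K ≤ A → K = B ∨ K = A) →
        ∀ a : G ⧸ N, a ∈ A → ⁅a, QuotientGroup.mk' N g⁆ ∈ B)}


section ChiefAux

variable {Q : Type*} [Group Q]

/-- Minimal normal subgroups are centralized by nilpotent normal subgroups. -/
theorem commutator_eq_bot_of_minimal_normal (A H : Subgroup Q) (hA : A.Normal) (hH : H.Normal)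
    (hnil : Group.IsNilpotent ↥H) (hne : A ≠ ⊥)
    (hmin : ∀ S : Subgroup Q, S.Normal → S ≤ A → S = ⊥ ∨ S = A) :
    ⁅A, H⁆ = ⊥ := by
  haveI := hA; haveI := hH
  have hle : ⁅A, H⁆ ≤ A := Subgroup.commutator_le_left A H
  have hnorm : (⁅A, H⁆ : Subgroup Q).Normal := Subgroup.commutator_normal A H
  rcases hmin _ hnorm hle with h | h
  · exact h
  · exfalso
    have hAH : A ≤ H := le_trans h.symm.le (Subgroup.commutator_le_right A H)
    have hmaptop : ((⊤ : Subgroup ↥H).map H.subtype) = H := by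
      rw [← MonoidHom.range_eq_map, Subgroup.range_subtype]
    have key : ∀ n, A ≤ ((⊤ : Subgroup ↥H).lowerCentralSeries n).map H.subtype := by
      intro n
      induction n with
      | zero =>
        simpa [Subgroup.lowerCentralSeries] using hmaptop.symm.le.trans' hAH
      | succ n ih =>
        have hstep : ((⊤ : Subgroup ↥H).lowerCentralSeries (n + 1)).map H.subtype
            = ⁅((⊤ : Subgroup ↥H).lowerCentralSeries n).map H.subtype, H⁆ := by
          have : (⊤ : Subgroup ↥H).lowerCentralSeries (n + 1) = ⁅(⊤ : Subgroup ↥H).lowerCentralSeries n, ⊤⁆ := rfl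
          rw [this, Subgroup.map_commutator, hmaptop]
        calc A = ⁅A, H⁆ := h.symm
          _ ≤ ⁅((⊤ : Subgroup ↥H).lowerCentralSeries n).map H.subtype, H⁆ :=
              Subgroup.commutator_mono ih le_rfl
          _ = ((⊤ : Subgroup ↥H).lowerCentralSeries (n + 1)).map H.subtype := hstep.symm
    obtain ⟨n, hn⟩ := Subgroup.nilpotent_iff_lowerCentralSeries.mp hnil
    have : A ≤ ⊥ := by
      have := key n
      rw [hn] at this
      simpa using this
    exact hne (le_bot_iff.mp this)

/-- Chief factors are centralized by nilpotent normal subgroups. -/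
theorem centralizes_chief_of_nilpotent_normal (A B H : Subgroup Q)
    (hA : A.Normal) (hB : B.Normal) (hH : H.Normal)
    (hnil : Group.IsNilpotent ↥H) (hBA : B < A)
    (hmin : ∀ K : Subgroup Q, K.Normal → B ≤ K → K ≤ A → K = B ∨ K = A) :
    ∀ a ∈ A, ∀ h ∈ H, ⁅a, h⁆ ∈ B := by
  haveI := hB
  let mk : Q →* Q ⧸ B := QuotientGroup.mk' B
  have hsurj : Function.Surjective mk := QuotientGroup.mk'_surjective B
  have hAq : (A.map mk).Normal := hA.map mk hsurj
  have hHq : (H.map mk).Normal := hH.map mk hsurj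
  have hnilq : Group.IsNilpotent ↥(H.map mk) := by
    haveI := hnil
    exact nilpotent_of_surjective (mk.subgroupMap H) (mk.subgroupMap_surjective H)
  have hne : A.map mk ≠ ⊥ := by
    obtain ⟨a, haA, haB⟩ := SetLike.exists_of_lt hBA
    intro hbot
    have hmem : mk a ∈ A.map mk := Subgroup.mem_map_of_mem mk haA
    rw [hbot, Subgroup.mem_bot] at hmem
    exact haB ((QuotientGroup.eq_one_iff a).mp hmem)
  have hminq : ∀ S : Subgroup (Q ⧸ B), S.Normal → S ≤ A.map mk → S = ⊥ ∨ S = A.map mk := by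
    intro S hS hSle
    have hT : (S.comap mk).Normal := hS.comap mk
    have hBT : B ≤ S.comap mk := by
      intro b hb
      have h1 : mk b = 1 := (QuotientGroup.eq_one_iff b).mpr hb
      show mk b ∈ S
      rw [h1]; exact S.one_mem
    have hTA : S.comap mk ≤ A := by
      intro x hx
      have hmem : mk x ∈ A.map mk := hSle hx
      obtain ⟨a, haA, hax⟩ := hmem
      have hax' : a⁻¹ * x ∈ B :=
        QuotientGroup.eq.mp (show ((a : Q ⧸ B)) = ((x : Q ⧸ B)) from hax)
      have hx' : x = a * (a⁻¹ * x) := by group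
      rw [hx']
      exact A.mul_mem haA (hBA.le hax')
    have hback : (S.comap mk).map mk = S := Subgroup.map_comap_eq_self_of_surjective hsurj S
    rcases hmin _ hT hBT hTA with h | h
    · left
      rw [← hback, h]
      rw [Subgroup.map_eq_bot_iff]
      intro b hb
      exact (QuotientGroup.eq_one_iff b).mpr hb
    · right
      rw [← hback, h]
  have hcomm : ⁅A.map mk, H.map mk⁆ = ⊥ :=
    commutator_eq_bot_of_minimal_normal _ _ hAq hHq hnilq hne hminq
  intro a ha h hh
  have hmem : mk ⁅a, h⁆ ∈ ⁅A.map mk, H.map mk⁆ := by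
    rw [map_commutatorElement]
    exact Subgroup.commutator_mem_commutator (Subgroup.mem_map_of_mem mk ha)
      (Subgroup.mem_map_of_mem mk hh)
  rw [hcomm, Subgroup.mem_bot] at hmem
  exact (QuotientGroup.eq_one_iff _).mp hmem

theorem subgroup_card_lt_of_lt [Finite Q] {K A : Subgroup Q} (h : K < A) :
    Nat.card ↥K < Nat.card ↥A := by
  have hs : (K : Set Q) ⊂ (A : Set Q) := SetLike.coe_ssubset_coe.mpr h
  have h2 : Nat.card ↥(K : Set Q) < Nat.card ↥(A : Set Q) := by
    rw [Nat.card_coe_set_eq, Nat.card_coe_set_eq]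
    exact Set.ncard_lt_ncard hs (Set.toFinite _)
  exact h2

theorem exists_chief_above [Finite Q] (B : Subgroup Q) (hB : B.Normal) (hne : B ≠ ⊤) :
    ∃ A : Subgroup Q, A.Normal ∧ B < A ∧
      ∀ K : Subgroup Q, K.Normal → B ≤ K → K ≤ A → K = B ∨ K = A := by
  have main : ∀ n (A₀ : Subgroup Q), A₀.Normal → B < A₀ → Nat.card ↥A₀ ≤ n →
      ∃ A : Subgroup Q, A.Normal ∧ B < A ∧
        ∀ K : Subgroup Q, K.Normal → B ≤ K → K ≤ A → K = B ∨ K = A := by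
    intro n
    induction n with
    | zero =>
      intro A₀ _ _ hcard
      have : 0 < Nat.card ↥A₀ := Nat.card_pos
      omega
    | succ n ih =>
      intro A₀ hA₀ hlt hcard
      by_cases hm : ∀ K : Subgroup Q, K.Normal → B ≤ K → K ≤ A₀ → K = B ∨ K = A₀
      · exact ⟨A₀, hA₀, hlt, hm⟩
      · push_neg at hm
        obtain ⟨K, hKn, hBK, hKA, hKneB, hKneA⟩ := hm
        have hltK : B < K := lt_of_le_of_ne hBK (Ne.symm hKneB)
        have hltA : K < A₀ := lt_of_le_of_ne hKA hKneA
        have hcardlt : Nat.card ↥K < Nat.card ↥A₀ := subgroup_card_lt_of_lt hltA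
        exact ih K hKn hltK (by omega)
  exact main (Nat.card ↥(⊤ : Subgroup Q)) ⊤ inferInstance (lt_top_iff_ne_top.mpr hne) le_rfl

theorem exists_chief_series (Q : Type*) [Group Q] [Finite Q] :
    ∃ (m : ℕ) (C : ℕ → Subgroup Q), C 0 = ⊥ ∧ C m = ⊤ ∧ (∀ k, (C k).Normal) ∧
      ∀ k, k < m → (C k < C (k + 1) ∧
        ∀ K : Subgroup Q, K.Normal → C k ≤ K → K ≤ C (k + 1) → K = C k ∨ K = C (k + 1)) := by
  have main : ∀ n (B : Subgroup Q), B.Normal → Nat.card Q - Nat.card ↥B ≤ n →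
      ∃ (m : ℕ) (C : ℕ → Subgroup Q), C 0 = B ∧ C m = ⊤ ∧ (∀ k, (C k).Normal) ∧
        ∀ k, k < m → (C k < C (k + 1) ∧
          ∀ K : Subgroup Q, K.Normal → C k ≤ K → K ≤ C (k + 1) → K = C k ∨ K = C (k + 1)) := by
    intro n
    induction n with
    | zero =>
      intro B hB hcard
      have hle : Nat.card ↥B ≤ Nat.card Q := Subgroup.card_le_card_group B
      have : B = ⊤ := Subgroup.eq_top_of_card_eq B (by omega)
      exact ⟨0, fun _ => B, rfl, by rw [this], fun _ => hB, fun k hk => absurd hk (by omega)⟩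
    | succ n ih =>
      intro B hB hcard
      by_cases hBtop : B = ⊤
      · exact ⟨0, fun _ => B, rfl, by rw [hBtop], fun _ => hB, fun k hk => absurd hk (by omega)⟩
      · obtain ⟨A, hAn, hBA, hAmin⟩ := exists_chief_above B hB hBtop
        have hcardlt : Nat.card ↥B < Nat.card ↥A := subgroup_card_lt_of_lt hBA
        have hcardle : Nat.card ↥A ≤ Nat.card Q := Subgroup.card_le_card_group A
        obtain ⟨m, C, hC0, hCm, hnorm, hchief⟩ := ih A hAn (by omega)
        refine ⟨m + 1, fun k => Nat.rec B (fun k _ => C k) k, rfl, hCm, ?_, ?_⟩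
        · intro k
          cases k with
          | zero => exact hB
          | succ k => exact hnorm k
        · intro k hk
          cases k with
          | zero =>
            constructor
            · show B < C 0
              rw [hC0]; exact hBA
            · show ∀ K : Subgroup Q, K.Normal → B ≤ K → K ≤ C 0 → K = B ∨ K = C 0
              rw [hC0]; exact hAmin
          | succ k => exact hchief k (by omega)
  exact main (Nat.card Q) ⊥ inferInstance (by omega)

theorem nilpotent_of_centralizes_chief [Finite Q] (H : Subgroup Q)
    (hc : ∀ A B : Subgroup Q, A.Normal → B.Normal → B < A →
      (∀ K : Subgroup Q, K.Normal → B ≤ K → K ≤ A → K = B ∨ K = A) →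
      ∀ a ∈ A, ∀ h ∈ H, ⁅a, h⁆ ∈ B) :
    Group.IsNilpotent ↥H := by
  obtain ⟨m, C, hC0, hCm, hnorm, hchief⟩ := exists_chief_series Q
  rw [nilpotent_iff_finite_descending_central_series]
  refine ⟨m, fun k => (C (m - k)).comap H.subtype, ⟨?_, ?_⟩, ?_⟩
  · show Subgroup.comap H.subtype (C (m - 0)) = ⊤
    rw [Nat.sub_zero, hCm, Subgroup.comap_top]
  · intro x k hx g
    rcases Nat.lt_or_ge k m with hk | hk
    · have hmk : m - k = (m - (k + 1)) + 1 := by omega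
      obtain ⟨hlt, hmin⟩ := hchief (m - (k + 1)) (by omega)
      have hxC : (x : Q) ∈ C (m - (k + 1) + 1) := by
        rw [← hmk]; exact hx
      have hcomm := hc (C (m - (k + 1) + 1)) (C (m - (k + 1))) (hnorm _) (hnorm _) hlt hmin
        (x : Q) hxC (g : Q) g.2
      show ((x * g * x⁻¹ * g⁻¹ : ↥H) : Q) ∈ C (m - (k + 1))
      rw [commutatorElement_def] at hcomm
      push_cast
      exact hcomm
    · have hx0 : (x : Q) ∈ (⊥ : Subgroup Q) := by
        have h0 : m - k = 0 := by omega
        have hx' : x ∈ Subgroup.comap H.subtype (C (m - k)) := hx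
        rw [h0, hC0] at hx'
        exact hx'
      have hx1 : x = 1 := Subtype.ext (Subgroup.mem_bot.mp hx0)
      subst hx1
      simpa using Subgroup.one_mem _
  · show Subgroup.comap H.subtype (C (m - m)) = ⊥
    rw [Nat.sub_self, hC0, MonoidHom.comap_bot, Subgroup.ker_subtype]

/-- The centralizer of `A/B` as a subgroup. -/
def chiefCentSubgroup (A B : Subgroup Q) (hB : B.Normal) : Subgroup Q where
  carrier := {q | ∀ a ∈ A, ⁅a, q⁆ ∈ B}
  one_mem' := fun a _ => by rw [commutatorElement_one_right]; exact B.one_mem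
  mul_mem' := by
    intro p q hp hq a ha
    have h1 : ⁅a, p * q⁆ = ⁅a, p⁆ * (p * ⁅a, q⁆ * p⁻¹) := by
      simp only [commutatorElement_def]; group
    rw [h1]
    exact B.mul_mem (hp a ha) (hB.conj_mem _ (hq a ha) p)
  inv_mem' := by
    intro p hp a ha
    have h1 : ⁅a, p⁻¹⁆ = p⁻¹ * ⁅a, p⁆⁻¹ * p := by
      simp only [commutatorElement_def]; group
    rw [h1]
    have h2 := hB.conj_mem _ (B.inv_mem (hp a ha)) p⁻¹
    simpa using h2

theorem chiefCentSubgroup_normal (A B : Subgroup Q) (hA : A.Normal) (hB : B.Normal) :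
    (chiefCentSubgroup A B hB).Normal := by
  constructor
  intro q hq x a ha
  have h1 : ⁅a, x * q * x⁻¹⁆ = x * ⁅x⁻¹ * a * x, q⁆ * x⁻¹ := by
    simp only [commutatorElement_def]; group
  rw [h1]
  have h2 : x⁻¹ * a * x ∈ A := by
    have := hA.conj_mem a ha x⁻¹
    simpa using this
  exact hB.conj_mem _ (hq _ h2) x

end ChiefAux

theorem pronilpotent_radical_eq_chief_centralizers
    (G : Type) [Group G] [TopologicalSpace G] [IsTopologicalGroup G]
    [CompactSpace G] [T2Space G] [TotallyDisconnectedSpace G] :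
    ∃ F : Subgroup G, IsPronilpotentRadical G F ∧
      (F : Set G) = chiefCentralizersIntersection G := by
  classical
  let F : Subgroup G :=
    { carrier := chiefCentralizersIntersection G
      one_mem' := by
        intro N hN ho A B hA hB hlt hmin a ha
        rw [map_one, commutatorElement_one_right]
        exact B.one_mem
      mul_mem' := by
        intro g h hg hh N hN ho A B hA hB hlt hmin
        haveI := hN
        rw [map_mul]
        exact (chiefCentSubgroup A B hB).mul_mem (hg N hN ho A B hA hB hlt hmin)
          (hh N hN ho A B hA hB hlt hmin)
      inv_mem' := by
        intro g hg N hN ho A B hA hB hlt hmin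
        haveI := hN
        rw [map_inv]
        exact (chiefCentSubgroup A B hB).inv_mem (hg N hN ho A B hA hB hlt hmin) }
  have hFnormal : F.Normal := by
    constructor
    intro g hg x N hN ho A B hA hB hlt hmin
    haveI := hN
    have h1 : (QuotientGroup.mk' N) (x * g * x⁻¹)
        = (QuotientGroup.mk' N x) * (QuotientGroup.mk' N g) * (QuotientGroup.mk' N x)⁻¹ := by
      rw [map_mul, map_mul, map_inv]
    rw [h1]
    exact (chiefCentSubgroup_normal A B hA hB).conj_mem _
      (hg N hN ho A B hA hB hlt hmin) (QuotientGroup.mk' N x)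
  have hcomap_closed : ∀ (N : Subgroup G) (hN : N.Normal), IsOpen (N : Set G) →
      (haveI := hN; ∀ (A B : Subgroup (G ⧸ N)) (hB : B.Normal),
        IsClosed ((chiefCentSubgroup A B hB).comap (QuotientGroup.mk' N) : Set G)) := by
    intro N hN ho A B hB
    haveI := hN
    apply Subgroup.isClosed_of_isOpen
    apply Subgroup.isOpen_mono (H₁ := N) ?_ ho
    intro n hn
    show (QuotientGroup.mk' N) n ∈ chiefCentSubgroup A B hB
    intro a ha
    have h1 : (QuotientGroup.mk' N) n = 1 := (QuotientGroup.eq_one_iff n).mpr hn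
    rw [h1, commutatorElement_one_right]
    exact B.one_mem
  have hFclosed : IsClosed (F : Set G) := by
    have heq : (F : Set G) = ⋂ (N : Subgroup G) (hN : N.Normal) (_ : IsOpen (N : Set G)),
        (haveI := hN; ⋂ (A : Subgroup (G ⧸ N)) (B : Subgroup (G ⧸ N)) (_ : A.Normal)
          (hB : B.Normal) (_ : B < A)
          (_ : ∀ K : Subgroup (G ⧸ N), K.Normal → B ≤ K → K ≤ A → K = B ∨ K = A),
          ((chiefCentSubgroup A B hB).comap (QuotientGroup.mk' N) : Set G)) := by
      ext g
      simp only [Set.mem_iInter, SetLike.mem_coe, Subgroup.mem_comap]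
      exact Iff.rfl
    rw [heq]
    refine isClosed_iInter fun N => isClosed_iInter fun hN => isClosed_iInter fun ho => ?_
    haveI := hN
    refine isClosed_iInter fun A => isClosed_iInter fun B => isClosed_iInter fun hA =>
      isClosed_iInter fun hB => isClosed_iInter fun hlt => isClosed_iInter fun hmin => ?_
    exact hcomap_closed N hN ho A B hB
  have hFpronil : IsPronilpotent ↥F := by
    intro M hM hMopen
    haveI := hM
    obtain ⟨U, hUopen, hUeq⟩ := isOpen_induced_iff.mp hMopen
    have h1U : (1 : G) ∈ U := by
      have h1M : (1 : ↥F) ∈ (M : Set ↥F) := M.one_mem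
      rw [← hUeq] at h1M
      simpa using h1M
    obtain ⟨V, ⟨h1V, hVclopen⟩, hVU⟩ := (nhds_basis_clopen (1 : G)).mem_iff.mp
      (hUopen.mem_nhds h1U)
    obtain ⟨O, hOsub⟩ := IsTopologicalGroup.exist_openNormalSubgroup_sub_clopen_nhds_of_one
      hVclopen h1V
    have hNnormal : O.toOpenSubgroup.toSubgroup.Normal := O.isNormal'
    have hNopen : IsOpen (O.toOpenSubgroup.toSubgroup : Set G) := O.toOpenSubgroup.isOpen
    set N : Subgroup G := O.toOpenSubgroup.toSubgroup with hNdef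
    haveI := hNnormal
    haveI : Finite (G ⧸ N) := N.quotient_finite_of_isOpen hNopen
    let φ : ↥F →* G ⧸ N := (QuotientGroup.mk' N).comp F.subtype
    have hker : φ.ker ≤ M := by
      intro x hx
      have hxN : (x : G) ∈ N := by
        have h1 : φ x = 1 := hx
        exact (QuotientGroup.eq_one_iff (x : G)).mp h1
      have hxU : (x : G) ∈ U := hVU (hOsub hxN)
      show x ∈ (M : Set ↥F)
      rw [← hUeq]
      exact hxU
    have hnilR : Group.IsNilpotent ↥φ.range := by
      apply nilpotent_of_centralizes_chief
      intro A B hA hB hlt hmin a ha h hh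
      obtain ⟨x, rfl⟩ := hh
      exact x.2 N hNnormal hNopen A B hA hB hlt hmin a ha
    haveI := hnilR
    haveI : Group.IsNilpotent (↥F ⧸ φ.ker) :=
      nilpotent_of_mulEquiv (QuotientGroup.quotientKerEquivRange φ).symm
    refine nilpotent_of_surjective
      (QuotientGroup.map φ.ker M (MonoidHom.id ↥F) (by simpa using hker)) ?_
    intro y
    obtain ⟨x, rfl⟩ := QuotientGroup.mk_surjective y
    exact ⟨QuotientGroup.mk x, rfl⟩
  have hFmax : ∀ K : Subgroup G, IsClosed (K : Set G) → K.Normal → IsPronilpotent ↥K →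
      K ≤ F := by
    intro K _ hKnormal hKpro g hg
    show g ∈ chiefCentralizersIntersection G
    intro N hN ho A B hA hB hlt hmin a ha
    haveI := hN
    haveI : Finite (G ⧸ N) := N.quotient_finite_of_isOpen ho
    let ψ : ↥K →* G ⧸ N := (QuotientGroup.mk' N).comp K.subtype
    have hkerset : (ψ.ker : Set ↥K) = Subtype.val ⁻¹' (N : Set G) := by
      ext x
      simp only [SetLike.mem_coe, MonoidHom.mem_ker, Set.mem_preimage]
      exact QuotientGroup.eq_one_iff (x : G)
    have hkeropen : IsOpen (ψ.ker : Set ↥K) := by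
      rw [hkerset]
      exact ho.preimage continuous_subtype_val
    have hnilq := hKpro ψ.ker inferInstance hkeropen
    have hnilR : Group.IsNilpotent ↥ψ.range := by
      haveI := hnilq
      exact nilpotent_of_mulEquiv (QuotientGroup.quotientKerEquivRange ψ)
    have hrange : ψ.range = K.map (QuotientGroup.mk' N) := by
      show ((QuotientGroup.mk' N).comp K.subtype).range = K.map (QuotientGroup.mk' N)
      rw [MonoidHom.range_comp, Subgroup.range_subtype]
    have hRnormal : ψ.range.Normal := by
      rw [hrange]
      exact hKnormal.map _ (QuotientGroup.mk'_surjective N)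
    exact centralizes_chief_of_nilpotent_normal A B ψ.range hA hB hRnormal hnilR hlt hmin
      a ha ((QuotientGroup.mk' N) g) ⟨⟨g, hg⟩, rfl⟩
  exact ⟨F, ⟨hFclosed, hFnormal, hFpronil, hFmax⟩, rfl⟩
end

section
/- Let G be a profinite group, p a prime, and g a p-element of G lying in F₂(G) but not in F(G). Then g induces by conjugation a non-trivial automorphism of the Hall p'-subgroup H of F(G), i.e. [H, g] ≠ 1. -/
open scoped commutatorElement

section Aux
set_option linter.unusedSectionVars false
open Subgroup


/-- Decompose an element of finite order into commuting `q`-part and `q'`-part,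
both powers of the element. -/
lemma exists_primePow_mul_coprime_part {X : Type*} [Group X] (q : ℕ) (hq : q.Prime) (x : X)
    (hx : orderOf x ≠ 0) :
    ∃ y z : X, x = y * z ∧ Commute y z ∧ y ∈ Subgroup.zpowers x ∧ z ∈ Subgroup.zpowers x ∧
      orderOf y ∣ q ^ (orderOf x).factorization q ∧ orderOf z ∣ orderOf x / q ^ (orderOf x).factorization q := by
  set n := orderOf x with hn
  set e := n.factorization q with he
  set pe := q ^ e with hpe
  set m := n / q ^ n.factorization q with hm
  have hnm : pe * m = n := Nat.ordProj_mul_ordCompl_eq_self n q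
  have hm0 : m ≠ 0 := by
    intro h
    rw [h, mul_zero] at hnm
    exact hx hnm.symm
  have hco : Nat.Coprime pe m := Nat.Coprime.pow_left e (Nat.coprime_ordCompl hq hx)
  by_cases hm1 : m = 1
  · refine ⟨x, 1, (mul_one x).symm, Commute.one_right x, Subgroup.mem_zpowers x,
      Subgroup.one_mem _, ?_, by simp⟩
    have : n = pe := by rw [← hnm, hm1, mul_one]
    rw [← hn, this]
  · have h1m : 1 < m := Nat.lt_of_le_of_ne (Nat.one_le_iff_ne_zero.mpr hm0) (Ne.symm hm1)
    obtain ⟨a, -, ha⟩ := Nat.exists_mul_mod_eq_one_of_coprime hco h1m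
    set z := x ^ (pe * a) with hz
    set y := x * z⁻¹ with hy
    have hxz : Commute x z := (Commute.refl x).pow_right _
    have hMod : pe * a ≡ 1 [MOD m] := by
      unfold Nat.ModEq
      rw [ha, Nat.mod_eq_of_lt h1m]
    refine ⟨y, z, by rw [hy, inv_mul_cancel_right], ?_, ?_, ?_, ?_, ?_⟩
    · exact Commute.mul_left hxz ((Commute.refl z).inv_left)
    · exact Subgroup.mul_mem _ (Subgroup.mem_zpowers x) (Subgroup.inv_mem _ (Subgroup.pow_mem _ (Subgroup.mem_zpowers x) _))
    · exact Subgroup.pow_mem _ (Subgroup.mem_zpowers x) _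
    · -- orderOf y ∣ pe
      apply orderOf_dvd_of_pow_eq_one
      have hcop' : Commute x z⁻¹ := hxz.inv_right
      have hpow : x ^ (pe * (pe * a)) = x ^ pe := by
        rw [pow_eq_pow_iff_modEq]
        have := Nat.ModEq.mul_left' (c := pe) hMod
        rw [hnm] at this
        exact this.trans (by rw [mul_one])
      calc y ^ pe = x ^ pe * (z⁻¹) ^ pe := hcop'.mul_pow pe
        _ = x ^ pe * (x ^ (pe * (pe * a)))⁻¹ := by
            rw [inv_pow, hz, ← pow_mul, mul_comm (pe * a) pe]
        _ = 1 := by rw [hpow, mul_inv_cancel]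
    · -- orderOf z ∣ m
      apply orderOf_dvd_of_pow_eq_one
      rw [hz, ← pow_mul, mul_right_comm, hnm, pow_mul, hn, pow_orderOf_eq_one, one_pow]
section FiniteNilpotent

variable {Y : Type*} [Group Y] [Finite Y]

lemma mem_sylow_of_orderOf_dvd_pow {p : ℕ} [Fact p.Prime] (hnil : Group.IsNilpotent Y)
    {x : Y} {k : ℕ} (hx : orderOf x ∣ p ^ k) (P : Sylow p Y) : x ∈ (P : Subgroup Y) := by
  have h03 := (isNilpotent_of_finite_tfae (G := Y)).out 0 3
  have hPn : (P : Subgroup Y).Normal := h03.mp hnil p ‹_› P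
  obtain ⟨j, -, hj⟩ := (Nat.dvd_prime_pow Fact.out).mp hx
  have hpg : IsPGroup p (Subgroup.zpowers x) :=
    IsPGroup.of_card (by rw [Nat.card_zpowers, hj])
  obtain ⟨Q, hQ⟩ := hpg.exists_le_sylow
  haveI := Sylow.unique_of_normal P hPn
  have : Q = P := Subsingleton.elim Q P
  exact this ▸ hQ (Subgroup.mem_zpowers x)

lemma orderOf_dvd_pow_of_mem_sylow {p : ℕ} [Fact p.Prime] {P : Sylow p Y} {x : Y}
    (hx : x ∈ (P : Subgroup Y)) : ∃ k, orderOf x ∣ p ^ k := by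
  obtain ⟨n, hn⟩ := IsPGroup.iff_card.mp P.isPGroup'
  exact ⟨n, hn ▸ Subgroup.orderOf_dvd_natCard _ hx⟩

lemma exists_pPrimeCore (p : ℕ) (hp : p.Prime) (hnil : Group.IsNilpotent Y) :
    ∃ M : Subgroup Y, M.Normal ∧ (Nat.card M).Coprime p ∧
      ∀ x : Y, (orderOf x).Coprime p → x ∈ M := by
  classical
  have h03 := (isNilpotent_of_finite_tfae (G := Y)).out 0 3
  set S : Set (Subgroup Y) := {N | N.Normal ∧ (Nat.card N).Coprime p} with hS
  have hfin : S.Finite := Set.toFinite _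
  have hne : S.Nonempty := ⟨⊥, inferInstance, by rw [Subgroup.card_bot]; exact Nat.coprime_one_left p⟩
  obtain ⟨M, hMS, hMmax⟩ :=
    Set.Finite.exists_maximalFor (fun N : Subgroup Y => Nat.card N) S hfin hne
  have key : ∀ N, N ∈ S → N ≤ M := by
    intro N hN
    haveI : M.Normal := hMS.1
    haveI : N.Normal := hN.1
    have hsupS : (M ⊔ N) ∈ S := by
      refine ⟨inferInstance, ?_⟩
      have h1 : (M.subgroupOf (M ⊔ N)).index * Nat.card (M.subgroupOf (M ⊔ N)) =
          Nat.card ↥(M ⊔ N) := Subgroup.index_mul_card _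
      have h2 : Nat.card (M.subgroupOf (M ⊔ N)) = Nat.card M :=
        Nat.card_congr (Subgroup.subgroupOfEquivOfLe le_sup_left).toEquiv
      have h4 : M.relIndex (M ⊔ N) = M.relIndex N := Subgroup.relIndex_sup_left N M
      have h4' : (M.subgroupOf (M ⊔ N)).index = M.relIndex (M ⊔ N) := rfl
      have h5 : M.relIndex N ∣ Nat.card N :=
        Dvd.intro _ (Subgroup.index_mul_card (M.subgroupOf N)).symm.symm
      have hdvd : Nat.card ↥(M ⊔ N) ∣ Nat.card N * Nat.card M := by
        rw [← h1, h2, h4', h4]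
        exact Nat.mul_dvd_mul h5 dvd_rfl
      exact Nat.Coprime.coprime_dvd_left hdvd (Nat.Coprime.mul hN.2 hMS.2)
    have hcard := hMmax hsupS (Subgroup.card_le_of_le le_sup_left)
    have heq : M = M ⊔ N := Subgroup.eq_of_le_of_card_ge le_sup_left hcard
    rw [heq]
    exact le_sup_right
  refine ⟨M, hMS.1, hMS.2, ?_⟩
  have main : ∀ n, ∀ x : Y, orderOf x ≤ n → (orderOf x).Coprime p → x ∈ M := by
    intro n
    induction n with
    | zero =>
      intro x hx _
      exact absurd (Nat.le_zero.mp hx) (orderOf_pos x).ne'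
    | succ n ih =>
      intro x hxle hxco
      by_cases h1 : orderOf x = 1
      · rw [orderOf_eq_one_iff] at h1
        rw [h1]
        exact one_mem M
      · obtain ⟨q, hq, hqd⟩ := Nat.exists_prime_and_dvd h1
        have hq_ne : q ≠ p := by
          rintro rfl
          have hd1 : q ∣ Nat.gcd (orderOf x) q := Nat.dvd_gcd hqd dvd_rfl
          rw [hxco] at hd1
          exact hq.one_lt.ne' (Nat.dvd_one.mp hd1)
        have hx0 : orderOf x ≠ 0 := (orderOf_pos x).ne'
        obtain ⟨y, z, hxyz, hcomm, hymem, hzmem, hyord, hzord⟩ :=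
          exists_primePow_mul_coprime_part q hq x hx0
        haveI : Fact q.Prime := ⟨hq⟩
        obtain ⟨Q⟩ := (inferInstance : Nonempty (Sylow q Y))
        have hyQ : y ∈ (Q : Subgroup Y) := mem_sylow_of_orderOf_dvd_pow hnil hyord Q
        have hQS : (Q : Subgroup Y) ∈ S := by
          refine ⟨h03.mp hnil q ⟨hq⟩ Q, ?_⟩
          obtain ⟨s, hs⟩ := IsPGroup.iff_card.mp Q.isPGroup'
          rw [hs]
          exact Nat.Coprime.pow_left s ((Nat.coprime_primes hq hp).mpr hq_ne)
        have hyM : y ∈ M := key _ hQS hyQ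
        have he1 : 1 ≤ (orderOf x).factorization q := hq.factorization_pos_of_dvd hx0 hqd
        have hm_lt : orderOf x / q ^ (orderOf x).factorization q < orderOf x :=
          Nat.div_lt_self (Nat.pos_of_ne_zero hx0)
            (Nat.one_lt_pow (by omega) hq.one_lt)
        have hmpos : 0 < orderOf x / q ^ (orderOf x).factorization q := Nat.ordCompl_pos q hx0
        have hzlt : orderOf z < orderOf x := lt_of_le_of_lt (Nat.le_of_dvd hmpos hzord) hm_lt
        have hzco : (orderOf z).Coprime p :=
          Nat.Coprime.coprime_dvd_left (hzord.trans (Nat.ordCompl_dvd (orderOf x) q)) hxco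
        have hzM : z ∈ M := ih z (by omega) hzco
        rw [hxyz]
        exact mul_mem hyM hzM
  intro x hx
  exact main (orderOf x) x le_rfl hx


lemma coprime_orderOf_mul (p : ℕ) (hp : p.Prime) (hnil : Group.IsNilpotent Y) {a b : Y}
    (ha : (orderOf a).Coprime p) (hb : (orderOf b).Coprime p) :
    (orderOf (a * b)).Coprime p := by
  obtain ⟨M, _, hMco, hMall⟩ := exists_pPrimeCore p hp hnil
  exact Nat.Coprime.coprime_dvd_left
    (Subgroup.orderOf_dvd_natCard M (mul_mem (hMall a ha) (hMall b hb))) hMco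

lemma orderOf_mul_dvd_pow (p : ℕ) (hp : p.Prime) (hnil : Group.IsNilpotent Y) {a b : Y} {k l : ℕ}
    (ha : orderOf a ∣ p ^ k) (hb : orderOf b ∣ p ^ l) : ∃ j, orderOf (a * b) ∣ p ^ j := by
  haveI : Fact p.Prime := ⟨hp⟩
  obtain ⟨P⟩ := (inferInstance : Nonempty (Sylow p Y))
  exact orderOf_dvd_pow_of_mem_sylow
    (mul_mem (mem_sylow_of_orderOf_dvd_pow hnil ha P) (mem_sylow_of_orderOf_dvd_pow hnil hb P))

lemma commute_of_pPow_coprime (p : ℕ) (hp : p.Prime) (hnil : Group.IsNilpotent Y) {a b : Y} {k : ℕ}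
    (ha : orderOf a ∣ p ^ k) (hb : (orderOf b).Coprime p) : Commute a b := by
  haveI : Fact p.Prime := ⟨hp⟩
  have h03 := (isNilpotent_of_finite_tfae (G := Y)).out 0 3
  obtain ⟨P⟩ := (inferInstance : Nonempty (Sylow p Y))
  have hPn : (P : Subgroup Y).Normal := h03.mp hnil p ⟨hp⟩ P
  obtain ⟨M, hMn, hMco, hMall⟩ := exists_pPrimeCore p hp hnil
  have haP : a ∈ (P : Subgroup Y) := mem_sylow_of_orderOf_dvd_pow hnil ha P
  have hbM : b ∈ M := hMall b hb
  rw [← commutatorElement_eq_one_iff_commute]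
  have hcP : ⁅a, b⁆ ∈ (P : Subgroup Y) := by
    have h : ⁅a, b⁆ = a * (b * a⁻¹ * b⁻¹) := by group
    rw [h]
    exact mul_mem haP (hPn.conj_mem a⁻¹ (inv_mem haP) b)
  have hcM : ⁅a, b⁆ ∈ M := by
    rw [commutatorElement_def]
    exact mul_mem (hMn.conj_mem b hbM a) (inv_mem hbM)
  obtain ⟨s, hsP⟩ := orderOf_dvd_pow_of_mem_sylow hcP
  have h2 : orderOf ⁅a, b⁆ ∣ Nat.card M := Subgroup.orderOf_dvd_natCard _ hcM
  have hco : Nat.Coprime (p ^ s) (Nat.card M) := (Nat.Coprime.pow_right s hMco).symm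
  have h1 : orderOf ⁅a, b⁆ = 1 := Nat.dvd_one.mp (hco ▸ Nat.dvd_gcd hsP h2)
  exact orderOf_eq_one_iff.mp h1



end FiniteNilpotent
/-- A coprime-order element in the image of a finite subgroup lifts to a
coprime-order element of the subgroup. -/
lemma exists_coprime_order_preimage {X B : Type*} [Group X] [Group B] [Finite X]
    (f : X →* B) (p : ℕ) (hp : p.Prime) (A : Subgroup X) {b : B}
    (hb : b ∈ A.map f) (hco : (orderOf b).Coprime p) :
    ∃ a ∈ A, f a = b ∧ (orderOf a).Coprime p := by
  obtain ⟨a₀, ha₀A, ha₀⟩ := hb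
  have hx0 : orderOf a₀ ≠ 0 := (orderOf_pos a₀).ne'
  obtain ⟨y, z, hxyz, hcomm, hymem, hzmem, hyord, hzord⟩ :=
    exists_primePow_mul_coprime_part p hp a₀ hx0
  have hzco : (orderOf z).Coprime p :=
    Nat.Coprime.coprime_dvd_left hzord (Nat.coprime_ordCompl hp hx0).symm
  have hfy : orderOf (f y) ∣ p ^ (orderOf a₀).factorization p :=
    (orderOf_map_dvd f y).trans hyord
  have hfz : (orderOf (f z)).Coprime p :=
    Nat.Coprime.coprime_dvd_left (orderOf_map_dvd f z) hzco
  have hb_eq : b = f y * f z := by rw [← map_mul, ← hxyz, ha₀]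
  have hcomm' : Commute (f y) (f z) := hcomm.map f
  have hcop : Nat.Coprime (orderOf (f y)) (orderOf (f z)) :=
    Nat.Coprime.coprime_dvd_left hfy (Nat.Coprime.pow_left _ hfz.symm)
  have horder : orderOf b = orderOf (f y) * orderOf (f z) := by
    rw [hb_eq]
    exact hcomm'.orderOf_mul_eq_mul_orderOf_of_coprime hcop
  have hfy_dvd_b : orderOf (f y) ∣ orderOf b := horder ▸ dvd_mul_right _ _
  have hfy_co : (orderOf (f y)).Coprime p := Nat.Coprime.coprime_dvd_left hfy_dvd_b hco
  have hfy1 : orderOf (f y) = 1 :=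
    Nat.Coprime.eq_one_of_dvd (Nat.Coprime.pow_right _ hfy_co) hfy
  have hfyone : f y = 1 := orderOf_eq_one_iff.mp hfy1
  refine ⟨z, ?_, ?_, hzco⟩
  · exact Subgroup.zpowers_le.mpr ha₀A hzmem
  · rw [hb_eq, hfyone, one_mul]
section Profinite

variable {G : Type} [Group G] [TopologicalSpace G] [IsTopologicalGroup G]
  [CompactSpace G] [T2Space G] [TotallyDisconnectedSpace G]

lemma exists_openNormal_le {O : Set G} (hO : IsOpen O) (h1 : (1 : G) ∈ O) :
    ∃ U : OpenNormalSubgroup G, (U : Set G) ⊆ O := by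
  obtain ⟨V, hVclopen, h1V, hVO⟩ := compact_exists_isClopen_in_isOpen hO h1
  obtain ⟨U, hU⟩ :=
    IsTopologicalGroup.exist_openNormalSubgroup_sub_clopen_nhds_of_one hVclopen h1V
  exact ⟨U, hU.trans hVO⟩

lemma exists_openNormal_inf_le (K : Subgroup G) (V : Subgroup ↥K)
    (hV : IsOpen (V : Set ↥K)) :
    ∃ U : OpenNormalSubgroup G, ∀ x : ↥K, (x : G) ∈ U.toSubgroup → x ∈ V := by
  rw [isOpen_induced_iff] at hV
  obtain ⟨O, hO, hOV⟩ := hV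
  have h1O : (1 : G) ∈ O := by
    have h1V : (1 : ↥K) ∈ (V : Set ↥K) := V.one_mem
    rw [← hOV] at h1V
    exact h1V
  obtain ⟨U, hU⟩ := exists_openNormal_le hO h1O
  refine ⟨U, fun x hx => ?_⟩
  have : x ∈ Subtype.val ⁻¹' O := hU hx
  rw [hOV] at this
  exact this

lemma orderOf_image_dvd_index (A : Subgroup G) (U : Subgroup G) [U.Normal] {x : G} (hx : x ∈ A) :
    orderOf (QuotientGroup.mk' U x) ∣ (U.subgroupOf A).index := by
  set χ := (QuotientGroup.mk' U).comp A.subtype with hχ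
  have hker : ∀ a : ↥A, a ∈ U.subgroupOf A → χ a = 1 := by
    intro a ha
    simp only [hχ, MonoidHom.comp_apply, Subgroup.coe_subtype]
    rw [QuotientGroup.mk'_apply, QuotientGroup.eq_one_iff]
    exact ha
  set θ := QuotientGroup.lift (U.subgroupOf A) χ hker with hθ
  have hxeq : QuotientGroup.mk' U x = θ (QuotientGroup.mk (⟨x, hx⟩ : ↥A)) := rfl
  rw [hxeq]
  exact (orderOf_map_dvd θ _).trans (orderOf_dvd_natCard _)

/-- The quotient of a subgroup by the trace of an open normal subgroup is isomorphic to
its image in the quotient group. -/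
noncomputable def quotientSubgroupOfMulEquivMap (K U : Subgroup G) [U.Normal] :
    (↥K ⧸ U.subgroupOf K) ≃* ↥(K.map (QuotientGroup.mk' U)) := by
  set χ := (QuotientGroup.mk' U).comp K.subtype with hχ
  have hker : χ.ker = U.subgroupOf K := by
    ext a
    simp only [hχ, MonoidHom.mem_ker, MonoidHom.comp_apply, Subgroup.coe_subtype,
      QuotientGroup.mk'_apply, QuotientGroup.eq_one_iff]
    rfl
  have hrange : χ.range = K.map (QuotientGroup.mk' U) := by
    rw [hχ, MonoidHom.range_comp, Subgroup.range_subtype]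
  exact ((QuotientGroup.quotientMulEquivOfEq hker.symm).trans
    (QuotientGroup.quotientKerEquivRange χ)).trans (MulEquiv.subgroupCongr hrange)

lemma image_nilpotent_of_pronilpotent {K : Subgroup G} (hK : IsPronilpotent ↥K)
    (U : Subgroup G) [U.Normal] (hUopen : IsOpen (U : Set G)) :
    Group.IsNilpotent ↥(K.map (QuotientGroup.mk' U)) := by
  have hopen : IsOpen ((U.subgroupOf K : Subgroup ↥K) : Set ↥K) :=
    hUopen.preimage continuous_subtype_val
  have hnorm : (U.subgroupOf K).Normal := Subgroup.Normal.subgroupOf ‹U.Normal› K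
  have hnil : Group.IsNilpotent (↥K ⧸ U.subgroupOf K) := hK (U.subgroupOf K) hnorm hopen
  exact nilpotent_of_mulEquiv (quotientSubgroupOfMulEquivMap K U)

lemma pronilpotent_of_images {K : Subgroup G}
    (h : ∀ U : OpenNormalSubgroup G,
      Group.IsNilpotent ↥(K.map (QuotientGroup.mk' U.toSubgroup))) :
    IsPronilpotent ↥K := by
  intro V hVnorm hVopen
  obtain ⟨U, hU⟩ := exists_openNormal_inf_le K V hVopen
  haveI : U.toSubgroup.Normal := U.isNormal'
  haveI : (U.toSubgroup.subgroupOf K).Normal := Subgroup.Normal.subgroupOf U.isNormal' K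
  haveI := h U
  have h1 : Group.IsNilpotent (↥K ⧸ U.toSubgroup.subgroupOf K) :=
    nilpotent_of_mulEquiv (quotientSubgroupOfMulEquivMap K U.toSubgroup).symm
  have hle : U.toSubgroup.subgroupOf K ≤ V := fun x hx => hU x hx
  have hsurj : Function.Surjective
      (QuotientGroup.map (U.toSubgroup.subgroupOf K) V (MonoidHom.id ↥K) hle) := by
    intro y
    obtain ⟨x, rfl⟩ := QuotientGroup.mk'_surjective V y
    exact ⟨QuotientGroup.mk x, rfl⟩
  exact nilpotent_of_surjective (h := h1) _ hsurj


/-- The preimage in `F` of the set of `p'`-elements of the image of `F` in `G ⧸ U`. -/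
def pPrimePreimage (p : ℕ) (hp : p.Prime) (F : Subgroup G) (U : OpenNormalSubgroup G)
    (hnil : Group.IsNilpotent ↥(F.map (QuotientGroup.mk' U.toSubgroup))) : Subgroup G where
  carrier := {x : G | x ∈ F ∧ (orderOf (QuotientGroup.mk' U.toSubgroup x)).Coprime p}
  one_mem' := ⟨F.one_mem, by rw [map_one, orderOf_one]; exact Nat.coprime_one_left p⟩
  inv_mem' := by
    rintro x ⟨hxF, hxco⟩
    exact ⟨F.inv_mem hxF, by rw [map_inv, orderOf_inv]; exact hxco⟩
  mul_mem' := by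
    rintro a b ⟨haF, haco⟩ ⟨hbF, hbco⟩
    refine ⟨F.mul_mem haF hbF, ?_⟩
    haveI : U.toSubgroup.Normal := U.isNormal'
    haveI : Finite (G ⧸ U.toSubgroup) :=
      Subgroup.quotient_finite_of_isOpen U.toSubgroup U.isOpen
    set π := QuotientGroup.mk' U.toSubgroup with hπ
    have haM : π a ∈ F.map π := Subgroup.mem_map_of_mem π haF
    have hbM : π b ∈ F.map π := Subgroup.mem_map_of_mem π hbF
    have key := coprime_orderOf_mul p hp hnil
      (a := (⟨π a, haM⟩ : ↥(F.map π))) (b := (⟨π b, hbM⟩ : ↥(F.map π)))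
      (by rw [Subgroup.orderOf_mk]; exact haco)
      (by rw [Subgroup.orderOf_mk]; exact hbco)
    have hcoe : orderOf (π (a * b)) =
        orderOf ((⟨π a, haM⟩ * ⟨π b, hbM⟩ : ↥(F.map π)) : G ⧸ U.toSubgroup) := by
      rw [map_mul]
      rfl
    rw [hcoe, Subgroup.orderOf_coe]
    exact key

lemma mem_pPrimePreimage_iff (p : ℕ) (hp : p.Prime) (F : Subgroup G)
    (U : OpenNormalSubgroup G) (hnil) (x : G) :
    x ∈ pPrimePreimage p hp F U hnil ↔
      x ∈ F ∧ (orderOf (QuotientGroup.mk' U.toSubgroup x)).Coprime p := Iff.rfl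

lemma pPrimePreimage_mono (p : ℕ) (hp : p.Prime) (F : Subgroup G)
    {U U' : OpenNormalSubgroup G} (hUU' : U.toSubgroup ≤ U'.toSubgroup) (hnil hnil') :
    pPrimePreimage p hp F U hnil ≤ pPrimePreimage p hp F U' hnil' := by
  rintro x ⟨hxF, hxco⟩
  refine ⟨hxF, ?_⟩
  haveI : U.toSubgroup.Normal := U.isNormal'
  haveI : U'.toSubgroup.Normal := U'.isNormal'
  have heq : QuotientGroup.mk' U'.toSubgroup x =
      (QuotientGroup.map U.toSubgroup U'.toSubgroup (MonoidHom.id G)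
        (fun u hu => hUU' hu)) (QuotientGroup.mk' U.toSubgroup x) := by
    rfl
  rw [heq]
  exact Nat.Coprime.coprime_dvd_left (orderOf_map_dvd _ _) hxco

lemma pPrimePreimage_closed (p : ℕ) (hp : p.Prime) (F : Subgroup G) (hFc : IsClosed (F : Set G))
    (U : OpenNormalSubgroup G) (hnil) :
    IsClosed ((pPrimePreimage p hp F U hnil : Subgroup G) : Set G) := by
  haveI : U.toSubgroup.Normal := U.isNormal'
  haveI : DiscreteTopology (G ⧸ U.toSubgroup) :=
    QuotientGroup.discreteTopology U.isOpen
  have : ((pPrimePreimage p hp F U hnil : Subgroup G) : Set G) =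
      (F : Set G) ∩ (QuotientGroup.mk' U.toSubgroup) ⁻¹'
        {w : G ⧸ U.toSubgroup | (orderOf w).Coprime p} := rfl
  rw [this]
  exact hFc.inter (IsClosed.preimage QuotientGroup.continuous_mk (isClosed_discrete _))



end Profinite
end Aux

section Main

set_option linter.unusedSectionVars false
set_option maxHeartbeats 1000000

open Subgroup

variable {G : Type} [Group G] [TopologicalSpace G] [IsTopologicalGroup G]
  [CompactSpace G] [T2Space G] [TotallyDisconnectedSpace G]

/-- The key finite quotient computation: the image of the normal closure of `g` in a finite
quotient of `G` is nilpotent. -/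
lemma Kbar_nilpotent (p : ℕ) (hp : p.Prime)
    (F : Subgroup G) [F.Normal] (Fq : Subgroup (G ⧸ F)) [Fq.Normal]
    (hFqpro : IsPronilpotent ↥Fq)
    (H : Subgroup G) [H.Normal]
    (g : G) (hgFq : (QuotientGroup.mk g : G ⧸ F) ∈ Fq)
    (hcommG : ∀ y : G, ∀ h ∈ H, Commute (y * g * y⁻¹) h)
    (U : OpenNormalSubgroup G)
    (hgord : ∃ k, orderOf (QuotientGroup.mk' U.toSubgroup g) ∣ p ^ k)
    (himageU : ∀ b : G ⧸ U.toSubgroup, b ∈ F.map (QuotientGroup.mk' U.toSubgroup) →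
      (orderOf b).Coprime p → b ∈ H.map (QuotientGroup.mk' U.toSubgroup)) :
    Group.IsNilpotent ↥(Subgroup.normalClosure {QuotientGroup.mk' U.toSubgroup g}) := by
  classical
  haveI : Fact p.Prime := ⟨hp⟩
  haveI : U.toSubgroup.Normal := U.isNormal'
  haveI : Finite (G ⧸ U.toSubgroup) := Subgroup.quotient_finite_of_isOpen _ U.isOpen
  set π := QuotientGroup.mk' U.toSubgroup with hπdef
  set gb := π g with hgbdef
  set Kb := Subgroup.normalClosure {gb} with hKbdef
  set Fb := F.map π with hFbdef
  set Hb := H.map π with hHbdef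
  haveI hFbN : Fb.Normal := Subgroup.Normal.map ‹F.Normal› π (QuotientGroup.mk'_surjective _)
  haveI hHbN : Hb.Normal := Subgroup.Normal.map ‹H.Normal› π (QuotientGroup.mk'_surjective _)
  obtain ⟨k, hgbord⟩ := hgord
  -- (B) every element of Kb commutes with every element of Hb
  have hKbC : ∀ x ∈ Kb, ∀ h ∈ Hb, Commute x h := by
    have hle : Kb ≤ Subgroup.centralizer (Hb : Set (G ⧸ U.toSubgroup)) := by
      have h1 : Kb = Subgroup.closure (Group.conjugatesOfSet {gb}) := rfl
      rw [h1]
      apply (Subgroup.closure_le _).mpr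
      rintro c hc
      rw [Group.mem_conjugatesOfSet_iff] at hc
      obtain ⟨a, ha, hconj⟩ := hc
      rw [Set.mem_singleton_iff] at ha
      subst ha
      obtain ⟨u, hu⟩ := isConj_iff.mp hconj
      obtain ⟨y, rfl⟩ := QuotientGroup.mk'_surjective U.toSubgroup u
      rw [SetLike.mem_coe, Subgroup.mem_centralizer_iff]
      intro hb hhb
      obtain ⟨h, hhH, rfl⟩ := hhb
      have hcg : Commute (y * g * y⁻¹) h := hcommG y h hhH
      have : Commute (π (y * g * y⁻¹)) (π h) := hcg.map π
      have hcc : π (y * g * y⁻¹) = c := by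
        rw [← hu]
        simp only [map_mul, map_inv]
        rfl
      rw [hcc] at this
      exact this.eq.symm
    intro x hx h hh
    have := Subgroup.mem_centralizer_iff.mp (hle hx) h hh
    exact this.symm
  -- (C) p-powers of elements of Kb land in Fb
  set σ := QuotientGroup.mk' Fb with hσdef
  have hθker : ∀ f ∈ F, (σ.comp π) f = 1 := by
    intro f hf
    have : π f ∈ Fb := Subgroup.mem_map_of_mem π hf
    simp only [MonoidHom.comp_apply]
    rw [hσdef, QuotientGroup.mk'_apply, QuotientGroup.eq_one_iff]
    exact this
  set θ := QuotientGroup.lift F (σ.comp π) hθker with hθdef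
  have hθmk : ∀ y : G, θ (QuotientGroup.mk y) = σ (π y) := fun y => rfl
  have hθsurj : Function.Surjective θ := by
    intro w
    obtain ⟨v, rfl⟩ := QuotientGroup.mk'_surjective Fb w
    obtain ⟨y, rfl⟩ := QuotientGroup.mk'_surjective U.toSubgroup v
    exact ⟨QuotientGroup.mk y, rfl⟩
  set Nb := Fq.map θ with hNbdef
  haveI hNbnormal : Nb.Normal := Subgroup.Normal.map ‹Fq.Normal› θ hθsurj
  have hNbnil : Group.IsNilpotent ↥Nb := by
    set ψ := θ.comp Fq.subtype with hψdef
    have hrange : ψ.range = Nb := by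
      rw [hψdef, MonoidHom.range_comp, Subgroup.range_subtype]
    have hkeropen : IsOpen ((ψ.ker : Subgroup ↥Fq) : Set ↥Fq) := by
      set Wg := MonoidHom.ker (σ.comp π) with hWgdef
      have hUW : U.toSubgroup ≤ Wg := by
        intro u hu
        rw [hWgdef, MonoidHom.mem_ker, MonoidHom.comp_apply]
        have h1 : π u = 1 := by
          rw [hπdef, QuotientGroup.mk'_apply, QuotientGroup.eq_one_iff]
          exact hu
        rw [h1, map_one]
      have hWgopen : IsOpen (Wg : Set G) := Subgroup.isOpen_mono hUW U.isOpen
      have hsets : ((ψ.ker : Subgroup ↥Fq) : Set ↥Fq) =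
          Subtype.val ⁻¹' (QuotientGroup.mk '' (Wg : Set G) : Set (G ⧸ F)) := by
        ext a
        simp only [Set.mem_preimage, SetLike.mem_coe, MonoidHom.mem_ker, Set.mem_image]
        constructor
        · intro ha
          obtain ⟨y, hy⟩ := QuotientGroup.mk'_surjective F (a : G ⧸ F)
          refine ⟨y, ?_, hy⟩
          have ha' : θ ((a : G ⧸ F)) = 1 := ha
          have h5 : θ ((QuotientGroup.mk' F) y) = θ ((a : G ⧸ F)) := congrArg θ hy
          have hmem : (σ.comp π) y = 1 := (hθmk y).symm.trans (h5.trans ha')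
          exact MonoidHom.mem_ker.mpr hmem
        · rintro ⟨y, hyW, hy⟩
          have hk1 : (σ.comp π) y = 1 := MonoidHom.mem_ker.mp hyW
          have h5 : θ ((a : G ⧸ F)) = θ ((QuotientGroup.mk' F) y) := congrArg θ hy.symm
          have h6 : θ ((QuotientGroup.mk' F) y) = (σ.comp π) y := hθmk y
          exact h5.trans (h6.trans hk1)
      rw [hsets]
      exact IsOpen.preimage continuous_subtype_val (QuotientGroup.isOpenMap_coe _ hWgopen)
    have hnilq : Group.IsNilpotent (↥Fq ⧸ ψ.ker) := hFqpro ψ.ker (MonoidHom.normal_ker ψ) hkeropen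
    exact nilpotent_of_mulEquiv
      ((QuotientGroup.quotientKerEquivRange ψ).trans (MulEquiv.subgroupCongr hrange))
  have hσgbNb : σ gb ∈ Nb := by
    have h1 : σ gb = θ (QuotientGroup.mk g) := (hθmk g).symm
    rw [h1]
    exact Subgroup.mem_map_of_mem θ hgFq
  have hσgbord : orderOf (σ gb) ∣ p ^ k := (orderOf_map_dvd σ gb).trans hgbord
  set SP : Subgroup ((G ⧸ U.toSubgroup) ⧸ Fb) :=
    { carrier := {w | w ∈ Nb ∧ ∃ j, orderOf w ∣ p ^ j}
      one_mem' := ⟨Nb.one_mem, 0, by simp⟩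
      inv_mem' := by
        rintro w ⟨hw, j, hj⟩
        exact ⟨Nb.inv_mem hw, j, by rwa [orderOf_inv]⟩
      mul_mem' := by
        rintro a b ⟨haN, ja, hja⟩ ⟨hbN, jb, hjb⟩
        refine ⟨Nb.mul_mem haN hbN, ?_⟩
        obtain ⟨j, hj⟩ := orderOf_mul_dvd_pow (Y := ↥Nb) p hp hNbnil
          (a := ⟨a, haN⟩) (b := ⟨b, hbN⟩) (k := ja) (l := jb)
          (by rwa [Subgroup.orderOf_mk]) (by rwa [Subgroup.orderOf_mk])
        refine ⟨j, ?_⟩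
        rw [show a * b = ((⟨a, haN⟩ * ⟨b, hbN⟩ : ↥Nb) : ((G ⧸ U.toSubgroup) ⧸ Fb)) from rfl,
          Subgroup.orderOf_coe]
        exact hj } with hSPdef
  have hKbSP : ∀ x ∈ Kb, ∃ j, orderOf (σ x) ∣ p ^ j := by
    have hmap : Kb.map σ = Subgroup.normalClosure {σ gb} := by
      rw [hKbdef, Subgroup.map_normalClosure _ _ (QuotientGroup.mk'_surjective Fb),
        Set.image_singleton]
    have hle : Subgroup.normalClosure ({σ gb} : Set _) ≤ SP := by
      have h1 : Subgroup.normalClosure ({σ gb} : Set _) =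
          Subgroup.closure (Group.conjugatesOfSet {σ gb}) := rfl
      rw [h1]
      apply (Subgroup.closure_le _).mpr
      rintro c hc
      rw [Group.mem_conjugatesOfSet_iff] at hc
      obtain ⟨a, ha, hconj⟩ := hc
      rw [Set.mem_singleton_iff] at ha
      subst ha
      obtain ⟨u, hu⟩ := isConj_iff.mp hconj
      rw [SetLike.mem_coe]
      refine ⟨?_, k, ?_⟩
      · rw [← hu]; exact hNbnormal.conj_mem _ hσgbNb u
      · rw [← hu, show u * σ gb * u⁻¹ = (MulAut.conj u) (σ gb) from rfl, MulEquiv.orderOf_eq]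
        exact hσgbord
    intro x hx
    have hin : σ x ∈ SP := hle (hmap ▸ Subgroup.mem_map_of_mem σ hx)
    exact hin.2
  have hKbF : ∀ x ∈ Kb, ∃ j, x ^ (p ^ j) ∈ Fb := by
    intro x hx
    obtain ⟨j, hj⟩ := hKbSP x hx
    refine ⟨j, ?_⟩
    have h1 : σ (x ^ (p ^ j)) = 1 := by
      rw [map_pow]
      exact orderOf_dvd_iff_pow_eq_one.mp hj
    rwa [hσdef, QuotientGroup.mk'_apply, QuotientGroup.eq_one_iff] at h1
  -- (D) p-powers of elements of Kb land in Hb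
  have hKbH : ∀ x ∈ Kb, ∃ j, x ^ (p ^ j) ∈ Hb := by
    intro x hx
    obtain ⟨j, hjF⟩ := hKbF x hx
    set c := x ^ (p ^ j) with hcdef
    have hc0 : orderOf c ≠ 0 := (orderOf_pos c).ne'
    obtain ⟨y, z, hczy, hcomm2, hymem, hzmem, hyord, hzord⟩ :=
      exists_primePow_mul_coprime_part p hp c hc0
    have hzF : z ∈ Fb := (Subgroup.zpowers_le.mpr hjF) hzmem
    have hzco : (orderOf z).Coprime p :=
      Nat.Coprime.coprime_dvd_left hzord (Nat.coprime_ordCompl hp hc0).symm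
    have hzH : z ∈ Hb := himageU z hzF hzco
    refine ⟨j + (orderOf c).factorization p, ?_⟩
    have hxpow : x ^ (p ^ (j + (orderOf c).factorization p)) =
        c ^ (p ^ ((orderOf c).factorization p)) := by
      rw [hcdef, ← pow_mul, pow_add]
    have hcE : c ^ (p ^ ((orderOf c).factorization p)) =
        y ^ (p ^ ((orderOf c).factorization p)) * z ^ (p ^ ((orderOf c).factorization p)) := by
      rw [hczy]
      exact hcomm2.mul_pow _
    have hyE : y ^ (p ^ ((orderOf c).factorization p)) = 1 :=
      orderOf_dvd_iff_pow_eq_one.mp hyord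
    rw [hxpow, hcE, hyE, one_mul]
    exact Hb.pow_mem hzH _
  -- (E) conclude
  set W := Hb.subgroupOf Kb with hWdef
  haveI hWnormal : W.Normal := by
    constructor
    intro a ha b
    rw [hWdef, Subgroup.mem_subgroupOf] at ha ⊢
    have hcomm3 : Commute ((b : G ⧸ U.toSubgroup)) ((a : G ⧸ U.toSubgroup)) :=
      hKbC b b.2 a ha
    have h1 : ((b * a * b⁻¹ : ↥Kb) : G ⧸ U.toSubgroup) = (a : G ⧸ U.toSubgroup) := by
      push_cast
      rw [hcomm3.eq, mul_inv_cancel_right]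
    rw [h1]
    exact ha
  have hcenter : (QuotientGroup.mk' W).ker ≤ Subgroup.center ↥Kb := by
    rw [QuotientGroup.ker_mk']
    intro a ha
    rw [Subgroup.mem_center_iff]
    intro b
    have hcomm4 : Commute ((b : G ⧸ U.toSubgroup)) ((a : G ⧸ U.toSubgroup)) :=
      hKbC b b.2 a (by rwa [hWdef, Subgroup.mem_subgroupOf] at ha)
    exact Subtype.ext hcomm4.eq
  have hquot : IsPGroup p (↥Kb ⧸ W) := by
    intro q
    obtain ⟨a, rfl⟩ := QuotientGroup.mk'_surjective W q
    obtain ⟨j, hj⟩ := hKbH a a.2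
    refine ⟨j, ?_⟩
    rw [← map_pow, QuotientGroup.mk'_apply, QuotientGroup.eq_one_iff]
    rw [hWdef, Subgroup.mem_subgroupOf]
    exact hj
  have hqnil : Group.IsNilpotent (↥Kb ⧸ W) := hquot.isNilpotent
  exact _root_.isNilpotent_of_ker_le_center (QuotientGroup.mk' W) hcenter

end Main

theorem p_element_in_F2_not_F_acts_nontrivially_on_hall
    (G : Type) [Group G] [TopologicalSpace G] [IsTopologicalGroup G]
    [CompactSpace G] [T2Space G] [TotallyDisconnectedSpace G]
    (p : ℕ) (hp : p.Prime)
    (F F2 : Subgroup G) [F.Normal]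
    (hF : IsPronilpotentRadical G F) (hF2 : IsSecondRadical G F F2)
    (g : G) (hg : IsPElement p g) (hgF2 : g ∈ F2) (hgF : g ∉ F)
    (H : Subgroup G) (hH : IsHallPComplement G p F H) :
    ∃ x ∈ H, ⁅x, g⁆ ≠ 1 := by
  classical
  haveI : Fact p.Prime := ⟨hp⟩
  obtain ⟨hFclosed, hFnormal, hFpro, hFmax⟩ := hF
  obtain ⟨Fq, hFqrad, hF2eq⟩ := hF2
  haveI hFqN : Fq.Normal := hFqrad.2.1
  obtain ⟨hHF, hHclosed, hHnormF, hHcop, hHmaxx⟩ := hH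
  by_contra hcon
  push_neg at hcon
  have hcomm : ∀ x ∈ H, Commute x g := fun x hx =>
    commutatorElement_eq_one_iff_commute.mp (hcon x hx)
  have hFnil : ∀ U : OpenNormalSubgroup G,
      Group.IsNilpotent ↥(F.map (QuotientGroup.mk' U.toSubgroup)) := by
    intro U
    haveI : U.toSubgroup.Normal := U.isNormal'
    exact image_nilpotent_of_pronilpotent hFpro U.toSubgroup U.isOpen
  set PU : OpenNormalSubgroup G → Subgroup G :=
    fun U => pPrimePreimage p hp F U (hFnil U) with hPUdef
  have hPUmono : ∀ {U U' : OpenNormalSubgroup G}, U.toSubgroup ≤ U'.toSubgroup →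
      PU U ≤ PU U' := fun h => pPrimePreimage_mono p hp F h _ _
  set H' : Subgroup G := ⨅ U, PU U with hH'def
  let Utop : OpenNormalSubgroup G := ⟨⊤, ⟨fun n _ gg => Subgroup.mem_top (gg * n * gg⁻¹)⟩⟩
  have hONmem : ∀ (A B : OpenNormalSubgroup G) (x : G),
      x ∈ (A ⊓ B).toSubgroup ↔ x ∈ A.toSubgroup ∧ x ∈ B.toSubgroup :=
    fun A B x => Subgroup.mem_inf
  have hH'F : H' ≤ F := fun x hx => ((Subgroup.mem_iInf.mp hx) Utop).1
  have hH'closed : IsClosed (H' : Set G) := by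
    have hsets : ((H' : Subgroup G) : Set G) = ⋂ U, ((PU U : Subgroup G) : Set G) := by
      rw [hH'def]
      simp [Subgroup.coe_iInf]
    rw [hsets]
    exact isClosed_iInter (fun U => pPrimePreimage_closed p hp F hFclosed U (hFnil U))
  have hH'normal : H'.Normal := by
    constructor
    intro x hx y
    rw [Subgroup.mem_iInf] at hx ⊢
    intro U
    obtain ⟨hxF, hxco⟩ := hx U
    refine ⟨hFnormal.conj_mem x hxF y, ?_⟩
    haveI : U.toSubgroup.Normal := U.isNormal'
    have heq : (QuotientGroup.mk' U.toSubgroup) (y * x * y⁻¹) =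
        (MulAut.conj ((QuotientGroup.mk' U.toSubgroup) y))
          ((QuotientGroup.mk' U.toSubgroup) x) := by
      rw [MulAut.conj_apply]
      simp [map_mul, map_inv]
    rw [heq, MulEquiv.orderOf_eq]
    exact hxco
  have hHleH' : H ≤ H' := by
    intro x hx
    rw [Subgroup.mem_iInf]
    intro U
    haveI : U.toSubgroup.Normal := U.isNormal'
    refine ⟨hHF hx, ?_⟩
    have hdvd := orderOf_image_dvd_index H U.toSubgroup hx
    have hopen : IsOpen ((U.toSubgroup.subgroupOf H : Subgroup ↥H) : Set ↥H) :=
      U.isOpen.preimage continuous_subtype_val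
    exact Nat.Coprime.coprime_dvd_left hdvd
      (hHcop (U.toSubgroup.subgroupOf H) (Subgroup.Normal.subgroupOf ‹_› H) hopen)
  have hH'cop : QuotientsCoprimeTo ↥H' p := by
    intro V hVnorm hVopen
    obtain ⟨U, hU⟩ := exists_openNormal_inf_le H' V hVopen
    haveI : U.toSubgroup.Normal := U.isNormal'
    haveI : Finite (G ⧸ U.toSubgroup) := Subgroup.quotient_finite_of_isOpen _ U.isOpen
    have hcards : (U.toSubgroup.subgroupOf H').index =
        Nat.card ↥(H'.map (QuotientGroup.mk' U.toSubgroup)) :=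
      Nat.card_congr (quotientSubgroupOfMulEquivMap H' U.toSubgroup).toEquiv
    have hall : ∀ w : ↥(H'.map (QuotientGroup.mk' U.toSubgroup)), (orderOf w).Coprime p := by
      rintro ⟨w, hw⟩
      rw [Subgroup.orderOf_mk]
      obtain ⟨x, hxH', rfl⟩ := hw
      exact ((Subgroup.mem_iInf.mp hxH') U).2
    have hcardco : (Nat.card ↥(H'.map (QuotientGroup.mk' U.toSubgroup))).Coprime p := by
      rw [Nat.coprime_comm, hp.coprime_iff_not_dvd]
      intro hdvd
      obtain ⟨w, hw⟩ := exists_prime_orderOf_dvd_card' p hdvd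
      have h1 := hall w
      rw [hw, Nat.Coprime, Nat.gcd_self] at h1
      exact hp.one_lt.ne' h1
    have hVle : U.toSubgroup.subgroupOf H' ≤ V := fun x hxx => hU x hxx
    exact Nat.Coprime.coprime_dvd_left (Subgroup.index_dvd_of_le hVle) (hcards ▸ hcardco)
  have hH'H : H' ≤ H := hHmaxx H' hH'F hH'closed (Subgroup.Normal.subgroupOf hH'normal F) hH'cop
  have hHeq : H = H' := le_antisymm hHleH' hH'H
  haveI hHnormalG : H.Normal := by rw [hHeq]; exact hH'normal
  have himage : ∀ (U₀ : OpenNormalSubgroup G) (b : G ⧸ U₀.toSubgroup),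
      b ∈ F.map (QuotientGroup.mk' U₀.toSubgroup) → (orderOf b).Coprime p →
      b ∈ H.map (QuotientGroup.mk' U₀.toSubgroup) := by
    intro U₀ b hbF hbco
    haveI : U₀.toSubgroup.Normal := U₀.isNormal'
    set C : OpenNormalSubgroup G → Set G := fun U =>
      {x : G | x ∈ PU (U ⊓ U₀) ∧ QuotientGroup.mk' U₀.toSubgroup x = b} with hCdef
    have hCne : ∀ U, (C U).Nonempty := by
      intro U
      haveI : (U ⊓ U₀).toSubgroup.Normal := (U ⊓ U₀).isNormal'
      haveI : Finite (G ⧸ (U ⊓ U₀).toSubgroup) :=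
        Subgroup.quotient_finite_of_isOpen _ (U ⊓ U₀).isOpen
      have hle : (U ⊓ U₀).toSubgroup ≤ U₀.toSubgroup := fun x hx => ((hONmem _ _ x).mp hx).2
      set ρ := QuotientGroup.map (U ⊓ U₀).toSubgroup U₀.toSubgroup (MonoidHom.id G)
        (fun u hu => hle hu) with hρdef
      have hcomp : ∀ x : G, ρ ((QuotientGroup.mk' (U ⊓ U₀).toSubgroup) x) =
          (QuotientGroup.mk' U₀.toSubgroup) x := by
        intro x
        rfl
      have hbmem' : b ∈ (F.map (QuotientGroup.mk' (U ⊓ U₀).toSubgroup)).map ρ := by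
        obtain ⟨f, hf, hfb⟩ := hbF
        exact ⟨(QuotientGroup.mk' (U ⊓ U₀).toSubgroup) f,
          Subgroup.mem_map_of_mem _ hf, by rw [hcomp]; exact hfb⟩
      obtain ⟨abar, habarF, hrhoabar, habarco⟩ :=
        exists_coprime_order_preimage ρ p hp (F.map (QuotientGroup.mk' (U ⊓ U₀).toSubgroup))
          hbmem' hbco
      obtain ⟨z, hzF, hz⟩ := habarF
      refine ⟨z, ⟨⟨hzF, by rw [hz]; exact habarco⟩, ?_⟩⟩
      rw [← hcomp z, hz, hrhoabar]
    have hCdir : Directed (· ⊇ ·) C := by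
      intro U₁ U₂
      refine ⟨U₁ ⊓ U₂, fun x hx => ?_, fun x hx => ?_⟩
      · obtain ⟨hx1, hx2⟩ := hx
        refine ⟨hPUmono (fun w hw => ?_) hx1, hx2⟩
        have hw' := (hONmem _ _ w).mp hw
        have hw'' := (hONmem _ _ w).mp hw'.1
        exact (hONmem _ _ w).mpr ⟨hw''.1, hw'.2⟩
      · obtain ⟨hx1, hx2⟩ := hx
        refine ⟨hPUmono (fun w hw => ?_) hx1, hx2⟩
        have hw' := (hONmem _ _ w).mp hw
        have hw'' := (hONmem _ _ w).mp hw'.1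
        exact (hONmem _ _ w).mpr ⟨hw''.2, hw'.2⟩
    have hCclosed : ∀ U, IsClosed (C U) := by
      intro U
      haveI : DiscreteTopology (G ⧸ U₀.toSubgroup) :=
        QuotientGroup.discreteTopology U₀.isOpen
      exact (pPrimePreimage_closed p hp F hFclosed (U ⊓ U₀) (hFnil _)).inter
        (IsClosed.preimage QuotientGroup.continuous_mk (isClosed_discrete {b}))
    have hCcompact : ∀ U, IsCompact (C U) := fun U => (hCclosed U).isCompact
    haveI : Nonempty (OpenNormalSubgroup G) := ⟨Utop⟩
    obtain ⟨w, hw⟩ := IsCompact.nonempty_iInter_of_directed_nonempty_isCompact_isClosed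
      C hCdir hCne hCcompact hCclosed
    rw [Set.mem_iInter] at hw
    have hwH : w ∈ H := by
      rw [hHeq]
      rw [Subgroup.mem_iInf]
      intro V
      exact hPUmono (fun u hu => ((hONmem _ _ u).mp hu).1) (hw V).1
    exact ⟨w, hwH, (hw U₀).2⟩
  set Cg := (Subgroup.closure ({g} : Set G)).topologicalClosure with hCgdef
  have hgC : g ∈ Cg :=
    Subgroup.le_topologicalClosure _ (Subgroup.subset_closure (Set.mem_singleton g))
  have hgord : ∀ U : OpenNormalSubgroup G,
      ∃ k, orderOf ((QuotientGroup.mk' U.toSubgroup) g) ∣ p ^ k := by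
    intro U
    haveI : U.toSubgroup.Normal := U.isNormal'
    have hdvd := orderOf_image_dvd_index Cg U.toSubgroup hgC
    have hopen : IsOpen ((U.toSubgroup.subgroupOf Cg : Subgroup ↥Cg) : Set ↥Cg) :=
      U.isOpen.preimage continuous_subtype_val
    obtain ⟨k, hk⟩ := hg (U.toSubgroup.subgroupOf Cg) (Subgroup.Normal.subgroupOf ‹_› Cg) hopen
    exact ⟨k, hk ▸ hdvd⟩
  have hcommG : ∀ y : G, ∀ h ∈ H, Commute (y * g * y⁻¹) h := by
    intro y h hh
    have hh' : y⁻¹ * h * y ∈ H := by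
      have := hHnormalG.conj_mem h hh y⁻¹
      simpa using this
    have h1 : Commute g (y⁻¹ * h * y) := (hcomm _ hh').symm
    have h2 : Commute ((MulAut.conj y) g) ((MulAut.conj y) (y⁻¹ * h * y)) :=
      h1.map (MulAut.conj y).toMonoidHom
    rw [MulAut.conj_apply, MulAut.conj_apply] at h2
    have h3 : y * (y⁻¹ * h * y) * y⁻¹ = h := by group
    rwa [h3] at h2
  set N := Subgroup.normalClosure ({g} : Set G) with hNdef
  set K := N.topologicalClosure with hKdef
  haveI hNnormal : N.Normal := Subgroup.normalClosure_normal
  haveI hKnormal : K.Normal := Subgroup.is_normal_topologicalClosure N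
  have hKmap : ∀ U : OpenNormalSubgroup G,
      K.map (QuotientGroup.mk' U.toSubgroup) =
        Subgroup.normalClosure {(QuotientGroup.mk' U.toSubgroup) g} := by
    intro U
    haveI : U.toSubgroup.Normal := U.isNormal'
    haveI : DiscreteTopology (G ⧸ U.toSubgroup) :=
      QuotientGroup.discreteTopology U.isOpen
    have h1 : K.map (QuotientGroup.mk' U.toSubgroup) =
        N.map (QuotientGroup.mk' U.toSubgroup) := by
      apply le_antisymm
      · rintro _ ⟨x, hxK, rfl⟩
        have hx' : x ∈ closure (N : Set G) := hxK
        have h2 : (QuotientGroup.mk' U.toSubgroup) x ∈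
            (QuotientGroup.mk' U.toSubgroup) '' (closure (N : Set G)) := ⟨x, hx', rfl⟩
        have h3 : (QuotientGroup.mk' U.toSubgroup) '' (closure (N : Set G)) ⊆
            closure ((QuotientGroup.mk' U.toSubgroup) '' (N : Set G)) :=
          image_closure_subset_closure_image QuotientGroup.continuous_mk
        have h4 : closure ((QuotientGroup.mk' U.toSubgroup) '' (N : Set G)) =
            (QuotientGroup.mk' U.toSubgroup) '' (N : Set G) :=
          IsClosed.closure_eq (isClosed_discrete _)
        have h5 := h4 ▸ h3 h2
        exact h5
      · exact Subgroup.map_mono (Subgroup.le_topologicalClosure N)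
    rw [h1, hNdef, Subgroup.map_normalClosure _ _ (QuotientGroup.mk'_surjective _),
      Set.image_singleton]
  have hgFq : (QuotientGroup.mk g : G ⧸ F) ∈ Fq := by
    have hg2 := hgF2
    rw [hF2eq, Subgroup.mem_comap] at hg2
    exact hg2
  have hKnil : ∀ U : OpenNormalSubgroup G,
      Group.IsNilpotent ↥(K.map (QuotientGroup.mk' U.toSubgroup)) := by
    intro U
    rw [hKmap U]
    exact Kbar_nilpotent p hp F Fq hFqrad.2.2.1 H g hgFq hcommG U (hgord U) (himage U)
  have hKpro : IsPronilpotent ↥K := pronilpotent_of_images hKnil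
  have hKF : K ≤ F := hFmax K (Subgroup.isClosed_topologicalClosure N) hKnormal hKpro
  exact hgF (hKF (Subgroup.le_topologicalClosure N
    (Subgroup.subset_normalClosure (Set.mem_singleton g))))
end

section
/- Let G be a profinite group and let F = F(G). Then F(G/Φ(F)) = F/Φ(F), where Φ(F) is the Frattini subgroup of F. -/
open scoped commutatorElement

open Subgroup QuotientGroup Group

section AuxFinite

/-- Gaschütz-type lemma: if `K` is normal in a finite group `G`, `N ≤ Φ(G)` is normal
with `N ≤ K`, and the image of `K` in `G ⧸ N` is nilpotent, then `K` is nilpotent. -/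
lemma aux_nilpotent_of_quotient_frattini {G : Type*} [Group G] [Finite G] (K N : Subgroup G)
    (hK : K.Normal) (hN : N.Normal) (hNF : N ≤ frattini G) (hNK : N ≤ K)
    (hnil : Group.IsNilpotent ↥(K.map (QuotientGroup.mk' N))) :
    Group.IsNilpotent ↥K := by
  haveI := hK; haveI := hN
  have qtfae := (Group.isNilpotent_of_finite_tfae (G := ↥K)).out 0 3
  rw [qtfae]
  intro p hp P
  haveI := hp
  set π := QuotientGroup.mk' N with hπ
  set KQ := K.map π with hKQ
  haveI hKQn : KQ.Normal := hK.map π (mk'_surjective N)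
  set ψ := π.subgroupMap K with hψ
  have hψs : Function.Surjective ψ := π.subgroupMap_surjective K
  haveI : Group.IsNilpotent ↥KQ := hnil
  set S : Sylow p ↥KQ := P.mapSurjective hψs with hS
  have qtfae2 := (Group.isNilpotent_of_finite_tfae (G := ↥KQ)).out 0 3
  have hSn : (S : Subgroup ↥KQ).Normal := qtfae2.mp ‹_› p hp S
  haveI hSc : (S : Subgroup ↥KQ).Characteristic := S.characteristic_of_normal hSn
  set P' := (P : Subgroup ↥K).map K.subtype with hP'
  have hP'K : P' ≤ K := map_subtype_le _
  set H := P' ⊔ N with hH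
  have hcomm : KQ.subtype.comp ψ = π.comp K.subtype := rfl
  have hmapπ : H.map π = (S : Subgroup ↥KQ).map KQ.subtype := by
    have h1 : P'.map π = ((P : Subgroup ↥K).map ψ).map KQ.subtype := by
      rw [hP', Subgroup.map_map, Subgroup.map_map, hcomm]
    have h2 : N.map π = ⊥ := by
      rw [eq_bot_iff]
      rintro x ⟨n, hn, rfl⟩
      simpa [Subgroup.mem_bot, hπ] using (QuotientGroup.eq_one_iff n).mpr hn
    rw [hH, Subgroup.map_sup, h2, sup_bot_eq, h1, Sylow.coe_mapSurjective]
  haveI hHQn : ((S : Subgroup ↥KQ).map KQ.subtype).Normal :=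
    ConjAct.normal_of_characteristic_of_normal
  haveI hHn : H.Normal := by
    have hHeq : H = ((H.map π).comap π) := by
      rw [Subgroup.comap_map_eq, QuotientGroup.ker_mk']
      exact (sup_eq_left.mpr le_sup_right).symm
    rw [hHeq, hmapπ]
    exact hHQn.comap π
  have hP'H : P' ≤ H := le_sup_left
  have hHK : H ≤ K := sup_le hP'K hNK
  set H' := H.subgroupOf K with hH'
  have hPH' : (P : Subgroup ↥K) ≤ H' := by
    intro x hx
    rw [hH', Subgroup.mem_subgroupOf]
    exact hP'H ⟨x, hx, rfl⟩
  set P₁ : Sylow p ↥H' := P.subtype hPH' with hP₁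
  set e : ↥H' ≃* ↥H := Subgroup.subgroupOfEquivOfLe hHK with he
  set P₂ : Sylow p ↥H := P₁.mapSurjective (show Function.Surjective ⇑e.toMonoidHom from e.surjective) with hP₂def
  have hP₂ : (P₂ : Subgroup ↥H).map H.subtype = P' := by
    have h1 : (P₂ : Subgroup ↥H) = (P₁ : Subgroup ↥H').map e.toMonoidHom :=
      Sylow.coe_mapSurjective _ _
    have h2 : H.subtype.comp e.toMonoidHom = K.subtype.comp H'.subtype := rfl
    have h3 : (P₁ : Subgroup ↥H') = (P : Subgroup ↥K).subgroupOf H' := P.coe_subtype hPH'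
    rw [h1, Subgroup.map_map, h2, ← Subgroup.map_map, h3,
      Subgroup.subgroupOf_map_subtype, inf_of_le_left hPH', hP']
  have frattArg := Sylow.normalizer_sup_eq_top P₂
  rw [hP₂] at frattArg
  have h1 : normalizer (P' : Set G) ⊔ frattini G = ⊤ := by
    rw [eq_top_iff, ← frattArg]
    exact sup_le le_sup_left
      (sup_le (Subgroup.le_normalizer.trans le_sup_left) (hNF.trans le_sup_right))
  have h2 : normalizer (P' : Set G) = ⊤ := frattini_nongenerating h1
  have h3 : P'.Normal := Subgroup.normalizer_eq_top_iff.mp h2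
  rw [hP'] at h3
  exact h3.of_map_subtype

/-- The Frattini subgroup of a normal subgroup of a finite group maps into the
Frattini subgroup of the whole group. -/
lemma aux_frattini_map_subtype_le {G : Type*} [Group G] [Finite G] (H : Subgroup G)
    [H.Normal] : (frattini ↥H).map H.subtype ≤ frattini G := by
  have key : ∀ M : Subgroup G, IsCoatom M → (frattini ↥H).map H.subtype ≤ M := by
    intro M hM
    by_contra hc
    haveI : ((frattini ↥H).map H.subtype).Normal :=
      ConjAct.normal_of_characteristic_of_normal
    have hlt : M < (frattini ↥H).map H.subtype ⊔ M :=
      lt_of_le_of_ne le_sup_right (fun h => hc (le_sup_left.trans h.ge))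
    have hsup : (frattini ↥H).map H.subtype ⊔ M = ⊤ := hM.2 _ hlt
    have htop : M.subgroupOf H ⊔ frattini ↥H = ⊤ := by
      rw [eq_top_iff]
      intro x _
      have hx : (x : G) ∈ ((↑((frattini ↥H).map H.subtype ⊔ M) : Set G)) := by
        rw [hsup]; trivial
      rw [Subgroup.normal_mul] at hx
      obtain ⟨a, ha, b, hb, hab⟩ := hx
      obtain ⟨u, hu, rfl⟩ := ha
      simp only [Subgroup.coe_subtype] at hab
      have hbH : b ∈ H := by
        have hb' : b = (u : G)⁻¹ * (x : G) := by
          rw [← hab]; group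
        rw [hb']
        exact H.mul_mem (H.inv_mem u.2) x.2
      have hxuv : x = u * ⟨b, hbH⟩ := Subtype.ext hab.symm
      rw [hxuv]
      refine Subgroup.mul_mem _ (Subgroup.mem_sup_right ?_) (Subgroup.mem_sup_left ?_)
      · exact hu
      · rwa [Subgroup.mem_subgroupOf]
    have hHM : H ≤ M := Subgroup.subgroupOf_eq_top.mp (frattini_nongenerating htop)
    exact hc ((map_subtype_le _).trans hHM)
  intro x hx
  simp only [frattini, Order.radical, Subgroup.mem_iInf, Set.mem_setOf_eq]
  intro M hM
  exact key M hM hx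

end AuxFinite

section AuxTop

variable {G : Type*} [Group G] [TopologicalSpace G]

lemma frattiniOpen_le {M : Subgroup G} (h1 : IsOpen (M : Set G)) (h2 : IsCoatom M) :
    frattiniOpen G ≤ M :=
  iInf_le_of_le M (iInf_le _ ⟨h1, h2⟩)

lemma mem_frattiniOpen_iff {x : G} :
    x ∈ frattiniOpen G ↔ ∀ M : Subgroup G, IsOpen (M : Set G) → IsCoatom M → x ∈ M := by
  simp only [frattiniOpen, Subgroup.mem_iInf]
  exact ⟨fun h M h1 h2 => h M ⟨h1, h2⟩, fun h M hM => h M hM.1 hM.2⟩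

/-- Image of a pronilpotent group under a continuous surjective homomorphism
is pronilpotent. -/
lemma aux_pronil_map {A B : Type*} [Group A] [TopologicalSpace A] [Group B]
    [TopologicalSpace B] (f : A →* B) (hc : Continuous f) (hs : Function.Surjective f)
    (hA : IsPronilpotent A) : IsPronilpotent B := by
  intro N hN hNo
  haveI := hN
  haveI hcn : (N.comap f).Normal := hN.comap f
  have hopen : IsOpen ((N.comap f : Subgroup A) : Set A) := hc.isOpen_preimage _ hNo
  have h1 : Group.IsNilpotent (A ⧸ N.comap f) := hA _ hcn hopen
  set θ := (QuotientGroup.mk' N).comp f with hθ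
  have hθs : Function.Surjective θ := (mk'_surjective N).comp hs
  have hker : θ.ker = N.comap f := by
    rw [hθ, ← MonoidHom.comap_ker, QuotientGroup.ker_mk']
  haveI := h1
  haveI h2 : Group.IsNilpotent (A ⧸ θ.ker) :=
    Group.nilpotent_of_mulEquiv (QuotientGroup.quotientMulEquivOfEq hker.symm)
  exact Group.nilpotent_of_mulEquiv (QuotientGroup.quotientKerEquivOfSurjective θ hθs)

/-- In a profinite group, every open neighbourhood of `1` contains an open normal
subgroup. -/
lemma aux_exists_openNormal {G : Type*} [Group G] [TopologicalSpace G] [IsTopologicalGroup G]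
    [CompactSpace G] [T2Space G] [TotallyDisconnectedSpace G] {U : Set G} (hU : IsOpen U)
    (h1 : (1 : G) ∈ U) :
    ∃ M : Subgroup G, M.Normal ∧ IsOpen (M : Set G) ∧ (M : Set G) ⊆ U := by
  obtain ⟨V, hV, h1V, hVU⟩ := compact_exists_isClopen_in_isOpen hU h1
  obtain ⟨M, hM⟩ := IsTopologicalGroup.exist_openNormalSubgroup_sub_clopen_nhds_of_one hV h1V
  exact ⟨M.toSubgroup, M.isNormal', M.isOpen', hM.trans hVU⟩

/-- The image of `frattiniOpen` under a surjective homomorphism whose kernel contains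
an open subgroup lands in the Frattini subgroup of the target. -/
lemma aux_frattiniOpen_map_le [IsTopologicalGroup G] {B : Type*} [Group B] (f : G →* B)
    (hs : Function.Surjective f) (hker : IsOpen ((f.ker : Subgroup G) : Set G)) :
    (frattiniOpen G).map f ≤ frattini B := by
  have key : ∀ M : Subgroup B, IsCoatom M → (frattiniOpen G).map f ≤ M := by
    intro M hM
    have hco : IsCoatom (M.comap f) := Subgroup.isCoatom_comap_of_surjective hs hM
    have hop : IsOpen ((M.comap f : Subgroup G) : Set G) :=
      Subgroup.isOpen_mono (fun x hx => by
        rw [Subgroup.mem_comap, MonoidHom.mem_ker.mp hx]; exact M.one_mem) hker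
    rw [Subgroup.map_le_iff_le_comap]
    exact frattiniOpen_le hop hco
  intro x hx
  simp only [frattini, Order.radical, Subgroup.mem_iInf, Set.mem_setOf_eq]
  exact fun M hM => key M hM hx

end AuxTop

theorem radical_mod_frattini
    (G : Type) [Group G] [TopologicalSpace G] [IsTopologicalGroup G]
    [CompactSpace G] [T2Space G] [TotallyDisconnectedSpace G]
    (F : Subgroup G) (hF : IsPronilpotentRadical G F)
    (Φ : Subgroup G) (hΦ : Φ = (frattiniOpen ↥F).map F.subtype) :
    ∃ hn : Φ.Normal,
      haveI := hn
      IsPronilpotentRadical (G ⧸ Φ) (F.map (QuotientGroup.mk' Φ)) := by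
  obtain ⟨hFc, hFn, hFpn, hFmax⟩ := hF
  haveI := hFn
  have hΦF : Φ ≤ F := hΦ ▸ map_subtype_le _
  -- Normality of Φ
  have hn : Φ.Normal := by
    constructor
    intro n hnΦ g
    rw [hΦ] at hnΦ ⊢
    obtain ⟨m, hm, rfl⟩ := hnΦ
    have hgF : g * (F.subtype m) * g⁻¹ ∈ F := hFn.conj_mem _ m.2 g
    refine ⟨⟨_, hgF⟩, ?_, rfl⟩
    simp only [SetLike.mem_coe] at hm ⊢
    rw [mem_frattiniOpen_iff] at hm ⊢
    intro M h1 h2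
    set e := MulAut.conjNormal (H := F) g with he
    have hcont : Continuous (⇑e.toMonoidHom : ↥F → ↥F) := by
      have heq : (⇑e.toMonoidHom : ↥F → ↥F)
          = fun x => ⟨g * (x : G) * g⁻¹, hFn.conj_mem _ x.2 g⟩ := by
        funext x
        apply Subtype.ext
        exact MulAut.conjNormal_apply g x
      rw [heq]
      exact Continuous.subtype_mk
        ((continuous_const.mul continuous_subtype_val).mul continuous_const) _
    have hopen : IsOpen ((M.comap e.toMonoidHom : Subgroup ↥F) : Set ↥F) :=
      hcont.isOpen_preimage _ h1
    have hco : IsCoatom (M.comap e.toMonoidHom) :=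
      Subgroup.isCoatom_comap_of_surjective e.surjective h2
    have hmem : m ∈ M.comap e.toMonoidHom := hm _ hopen hco
    rw [Subgroup.mem_comap] at hmem
    have hem : e.toMonoidHom m = ⟨g * (F.subtype m) * g⁻¹, hgF⟩ := by
      apply Subtype.ext
      exact MulAut.conjNormal_apply g m
    rwa [hem] at hmem
  refine ⟨hn, ?_⟩
  haveI := hn
  -- closedness of Φ
  have hΦclosed : IsClosed (Φ : Set G) := by
    haveI : CompactSpace ↥F := isCompact_iff_compactSpace.mp hFc.isCompact
    have hclosedF : IsClosed ((frattiniOpen ↥F : Subgroup ↥F) : Set ↥F) := by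
      have hiInf : ((frattiniOpen ↥F : Subgroup ↥F) : Set ↥F) =
          ⋂ (M : Subgroup ↥F), ⋂ (_ : IsOpen (M : Set ↥F) ∧ IsCoatom M), (M : Set ↥F) := by
        rw [frattiniOpen]
        simp [Subgroup.coe_iInf]
      rw [hiInf]
      exact isClosed_iInter fun M => isClosed_iInter fun hM =>
        Subgroup.isClosed_of_isOpen _ hM.1
    have himg : IsCompact (F.subtype '' ((frattiniOpen ↥F : Subgroup ↥F) : Set ↥F)) :=
      (hclosedF.isCompact).image continuous_subtype_val
    have hcoe : (Φ : Set G) = F.subtype '' ((frattiniOpen ↥F : Subgroup ↥F) : Set ↥F) := by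
      rw [hΦ]; rfl
    rw [hcoe]
    exact himg.isClosed
  set mkΦ := QuotientGroup.mk' Φ with hmkΦ
  refine ⟨?_, ?_, ?_, ?_⟩
  · -- closed
    have hpre : (QuotientGroup.mk : G → G ⧸ Φ) ⁻¹'
        ((F.map mkΦ : Subgroup (G ⧸ Φ)) : Set (G ⧸ Φ)) = (F : Set G) := by
      ext x
      simp only [Set.mem_preimage, SetLike.mem_coe, Subgroup.mem_map]
      constructor
      · rintro ⟨y, hy, hxy⟩
        have hmem : y⁻¹ * x ∈ Φ := by
          rw [← QuotientGroup.eq]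
          exact hxy
        have hx : x = y * (y⁻¹ * x) := by group
        rw [hx]
        exact F.mul_mem hy (hΦF hmem)
      · intro hx; exact ⟨x, hx, rfl⟩
    rw [← (QuotientGroup.isQuotientMap_mk Φ).isClosed_preimage, hpre]
    exact hFc
  · exact hFn.map mkΦ (mk'_surjective Φ)
  · -- pronilpotent
    refine aux_pronil_map (mkΦ.subgroupMap F) ?_ (mkΦ.subgroupMap_surjective F) hFpn
    apply Continuous.subtype_mk
    exact QuotientGroup.continuous_mk.comp continuous_subtype_val
  · -- maximality
    intro Kb hKbc hKbn hKbpn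
    set K := Kb.comap mkΦ with hKdef
    have hKc : IsClosed (K : Set G) := hKbc.preimage QuotientGroup.continuous_mk
    haveI hKn : K.Normal := hKbn.comap mkΦ
    have hΦK : Φ ≤ K := by
      intro x hx
      rw [hKdef, Subgroup.mem_comap]
      have h1 : mkΦ x = 1 := (QuotientGroup.eq_one_iff x).mpr hx
      rw [h1]; exact Kb.one_mem
    have hKbK : Kb = K.map mkΦ :=
      (Subgroup.map_comap_eq_self_of_surjective (mk'_surjective Φ) Kb).symm
    have hKpn : IsPronilpotent ↥K := by
      intro N hNn hNo
      haveI := hNn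
      rw [isOpen_induced_iff] at hNo
      obtain ⟨U, hUo, hUN⟩ := hNo
      have h1U : (1 : G) ∈ U := by
        have h1' : ((1 : ↥K) : G) ∈ U := by
          rw [← Set.mem_preimage, hUN]; exact N.one_mem
        simpa using h1'
      obtain ⟨M', hM'n, hM'o, hM'U⟩ := aux_exists_openNormal hUo h1U
      haveI := hM'n
      haveI : Finite (G ⧸ M') := M'.quotient_finite_of_isOpen hM'o
      set π := QuotientGroup.mk' M' with hπ
      set F₀ := F.map π with hF₀
      haveI hF₀n : F₀.Normal := hFn.map π (mk'_surjective M')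
      have hstep2 : Φ.map π ≤ frattini (G ⧸ M') := by
        set σ := π.subgroupMap F with hσ
        have hσs : Function.Surjective σ := π.subgroupMap_surjective F
        have hkerσ : IsOpen ((σ.ker : Subgroup ↥F) : Set ↥F) := by
          have hopenMF : IsOpen ((M'.subgroupOf F : Subgroup ↥F) : Set ↥F) := by
            have hc : ((M'.subgroupOf F : Subgroup ↥F) : Set ↥F)
                = (Subtype.val : ↥F → G) ⁻¹' (M' : Set G) := rfl
            rw [hc]
            exact hM'o.preimage continuous_subtype_val
          refine Subgroup.isOpen_mono (H₁ := M'.subgroupOf F) ?_ hopenMF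
          intro x hx
          rw [MonoidHom.mem_ker]
          apply Subtype.ext
          show (π (x : G) : G ⧸ M') = 1
          exact (QuotientGroup.eq_one_iff _).mpr hx
        have h1 : (frattiniOpen ↥F).map σ ≤ frattini ↥F₀ :=
          aux_frattiniOpen_map_le σ hσs hkerσ
        have h2 : Φ.map π = ((frattiniOpen ↥F).map σ).map F₀.subtype := by
          rw [hΦ, Subgroup.map_map, Subgroup.map_map]
          rfl
        rw [h2]
        exact (Subgroup.map_mono h1).trans (aux_frattini_map_subtype_le F₀)
      set N₀ := Φ.map π with hN₀
      haveI hN₀n : N₀.Normal := hn.map π (mk'_surjective M')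
      set K₀ := K.map π with hK₀
      haveI hK₀n : K₀.Normal := hKn.map π (mk'_surjective M')
      have hN₀K₀ : N₀ ≤ K₀ := Subgroup.map_mono hΦK
      set ρ := (QuotientGroup.mk' N₀).comp π with hρ
      have hΦρ : Φ ≤ ρ.ker := by
        intro x hx
        rw [MonoidHom.mem_ker, hρ, MonoidHom.comp_apply, ← MonoidHom.mem_ker,
          QuotientGroup.ker_mk']
        exact ⟨x, hx, rfl⟩
      set ρb := QuotientGroup.lift Φ ρ hΦρ with hρb
      set φK := ρb.comp Kb.subtype with hφK
      have hkerρ : M' ≤ ρ.ker := by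
        intro x hx
        rw [MonoidHom.mem_ker, hρ, MonoidHom.comp_apply]
        have hx1 : π x = 1 := (QuotientGroup.eq_one_iff _).mpr hx
        rw [hx1, map_one]
      have hkerρopen : IsOpen ((ρ.ker : Subgroup G) : Set G) :=
        Subgroup.isOpen_mono hkerρ hM'o
      have hkeropen : IsOpen ((φK.ker : Subgroup ↥Kb) : Set ↥Kb) := by
        have himg : IsOpen ((QuotientGroup.mk : G → G ⧸ Φ) '' (ρ.ker : Set G)) :=
          QuotientGroup.isOpenMap_coe _ hkerρopen
        have heq : ((φK.ker : Subgroup ↥Kb) : Set ↥Kb) =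
            (Subtype.val : ↥Kb → G ⧸ Φ) ⁻¹'
              ((QuotientGroup.mk : G → G ⧸ Φ) '' (ρ.ker : Set G)) := by
          ext x
          simp only [SetLike.mem_coe, MonoidHom.mem_ker, Set.mem_preimage, Set.mem_image,
            SetLike.mem_coe]
          obtain ⟨y, hy⟩ := QuotientGroup.mk_surjective (x : G ⧸ Φ)
          have hφx : φK x = ρb (x : G ⧸ Φ) := rfl
          constructor
          · intro hx
            refine ⟨y, ?_, hy⟩
            rw [hφx, ← hy] at hx
            exact hx
          · rintro ⟨z, hz, hzx⟩
            rw [hφx, ← hzx]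
            exact hz
        rw [heq]
        exact himg.preimage continuous_subtype_val
      haveI hφKn : φK.ker.Normal := MonoidHom.normal_ker φK
      have hnilq : Group.IsNilpotent (↥Kb ⧸ φK.ker) := hKbpn φK.ker hφKn hkeropen
      have hrange : φK.range = K₀.map (QuotientGroup.mk' N₀) := by
        rw [hφK, MonoidHom.range_comp, Subgroup.range_subtype, hKbK, Subgroup.map_map,
          hK₀, Subgroup.map_map]
        rfl
      have hnilKQ : Group.IsNilpotent ↥(K₀.map (QuotientGroup.mk' N₀)) := by
        rw [← hrange]
        haveI := hnilq
        exact Group.nilpotent_of_mulEquiv (QuotientGroup.quotientKerEquivRange φK)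
      have hKnil : Group.IsNilpotent ↥K₀ :=
        aux_nilpotent_of_quotient_frattini K₀ N₀ hK₀n hN₀n hstep2 hN₀K₀ hnilKQ
      set ψK := π.comp K.subtype with hψK
      have hkerψ : ψK.ker ≤ N := by
        intro x hx
        have hxM : (x : G) ∈ M' := by
          rw [MonoidHom.mem_ker, hψK, MonoidHom.comp_apply] at hx
          exact (QuotientGroup.eq_one_iff _).mp hx
        have hxU : x ∈ (Subtype.val : ↥K → G) ⁻¹' U := hM'U hxM
        rw [hUN] at hxU
        exact hxU
      have hrangeψ : ψK.range = K₀ := by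
        rw [hψK, MonoidHom.range_comp, Subgroup.range_subtype]
      have h3 : Group.IsNilpotent (↥K ⧸ ψK.ker) := by
        haveI : Group.IsNilpotent ↥ψK.range := by rw [hrangeψ]; exact hKnil
        exact Group.nilpotent_of_mulEquiv (QuotientGroup.quotientKerEquivRange ψK).symm
      haveI := h3
      exact Group.nilpotent_of_surjective
        (QuotientGroup.map ψK.ker N (MonoidHom.id ↥K) (by simpa using hkerψ))
        (fun x => by
          obtain ⟨y, rfl⟩ := QuotientGroup.mk_surjective x
          exact ⟨QuotientGroup.mk y, rfl⟩)
    have hKF : K ≤ F := hFmax K hKc hKn hKpn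
    rw [hKbK]
    exact Subgroup.map_mono hKF
end

section
/- If an element g of a group G has a finite left Engel sink, then g has a smallest left Engel sink E(g) (namely, the intersection of all left Engel sinks of g is a left Engel sink of g), and for every s ∈ E(g) there is an integer k ≥ 1 such that s = [s, g, ..., g] with g repeated k times. -/
open scoped commutatorElement

lemma commIter_add {G : Type*} [Group G] (g x : G) (m n : ℕ) :
    commIter x g (m + n) = commIter (commIter x g m) g n := by
  induction n with
  | zero => rfl
  | succ n ih =>
    show commIter x g ((m + n) + 1) = _
    show ⁅commIter x g (m + n), g⁆ = ⁅commIter (commIter x g m) g n, g⁆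
    rw [ih]

theorem smallest_left_engel_sink
    (G : Type) [Group G] (g : G)
    (h : ∃ E : Set G, E.Finite ∧ IsLeftEngelSink g E) :
    IsLeftEngelSink g (⋂₀ {E : Set G | IsLeftEngelSink g E}) ∧
      ∀ s ∈ ⋂₀ {E : Set G | IsLeftEngelSink g E},
        ∃ k : ℕ, 1 ≤ k ∧ s = commIter s g k := by
  obtain ⟨E₀, hfin, hsink⟩ := h
  have lemA : ∀ x : G, ∃ m p : ℕ, 0 < p ∧
      ∀ t n, m ≤ n → commIter x g (n + t * p) = commIter x g n := by
    intro x
    obtain ⟨n₀, -, htail⟩ := hsink x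
    haveI : Finite E₀ := hfin
    obtain ⟨i, j, hne, hij⟩ := Finite.exists_ne_map_eq_of_infinite
      (fun n : ℕ => (⟨commIter x g (n₀ + n), htail _ (Nat.le_add_right _ _)⟩ : E₀))
    wlog hlt : i < j generalizing i j
    · exact this j i hne.symm hij.symm (by omega)
    have hij' : commIter x g (n₀ + i) = commIter x g (n₀ + j) :=
      congrArg Subtype.val hij
    refine ⟨n₀ + i, j - i, by omega, ?_⟩
    have key : ∀ d, commIter x g (n₀ + i + d + (j - i)) = commIter x g (n₀ + i + d) := by
      intro d
      induction d with
      | zero =>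
        have e : n₀ + i + 0 + (j - i) = n₀ + j := by omega
        rw [e]
        simpa using hij'.symm
      | succ d ih =>
        have h1 : n₀ + i + (d + 1) + (j - i) = (n₀ + i + d + (j - i)) + 1 := by omega
        have h2 : n₀ + i + (d + 1) = (n₀ + i + d) + 1 := by omega
        rw [h1, h2]
        show ⁅commIter x g (n₀ + i + d + (j - i)), g⁆ = ⁅commIter x g (n₀ + i + d), g⁆
        rw [ih]
    have key' : ∀ n, n₀ + i ≤ n → commIter x g (n + (j - i)) = commIter x g n := by
      intro n hn
      have := key (n - (n₀ + i))
      rwa [show n₀ + i + (n - (n₀ + i)) = n by omega] at this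
    intro t n hn
    induction t with
    | zero => simp
    | succ t ih =>
      have e : n + (t + 1) * (j - i) = (n + t * (j - i)) + (j - i) := by ring
      rw [e, key' _ (by omega), ih]
  constructor
  · intro x
    obtain ⟨m, p, hp, hper⟩ := lemA x
    refine ⟨m + 1, Nat.succ_pos _, fun n hn => ?_⟩
    refine Set.mem_sInter.2 fun E hE => ?_
    obtain ⟨n₁, -, htail⟩ := hE x
    have hper1 := hper n₁ n (by omega)
    rw [← hper1]
    have : n₁ ≤ n₁ * p := Nat.le_mul_of_pos_right n₁ hp
    exact htail _ (by omega)
  · intro s hs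
    have hW : IsLeftEngelSink g {s : G | ∃ k : ℕ, 1 ≤ k ∧ s = commIter s g k} := by
      intro x
      obtain ⟨m, p, hp, hper⟩ := lemA x
      refine ⟨m + 1, Nat.succ_pos _, fun n hn => ⟨p, hp, ?_⟩⟩
      rw [← commIter_add]
      have := hper 1 n (by omega)
      rw [one_mul] at this
      exact this.symm
    exact hs _ hW
end

section
/- Let G be a metabelian group (i.e. the derived subgroup of G is abelian) and let g ∈ G. Then every right Engel sink of the inverse g⁻¹ is a left Engel sink of g. -/
open scoped commutatorElement

theorem right_sink_of_inverse_is_left_sink_metabelian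
    (G : Type) [Group G]
    (hmet : ∀ a ∈ commutator G, ∀ b ∈ commutator G, a * b = b * a)
    (g : G) (R : Set G) (hR : IsRightEngelSink g⁻¹ R) :
    IsLeftEngelSink g R := by
  intro x
  set w := ⁅x, g⁆ with hw
  obtain ⟨m₀, hm₀, hmem⟩ := hR (g * w)
  have hwG : w ∈ commutator G :=
    Subgroup.commutator_mem_commutator (Subgroup.mem_top x) (Subgroup.mem_top g)
  have key : ∀ m, 1 ≤ m → commIter g⁻¹ (g * w) m = commIter x g (m + 1) ∧
      commIter x g (m + 1) ∈ commutator G := by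
    intro m hm
    induction m with
    | zero => omega
    | succ k ih =>
      by_cases hk : k = 0
      · subst hk
        refine ⟨?_, Subgroup.commutator_mem_commutator (Subgroup.mem_top _) (Subgroup.mem_top g)⟩
        show ⁅commIter g⁻¹ (g * w) 0, g * w⁆ = ⁅commIter x g 1, g⁆
        show ⁅g⁻¹, g * w⁆ = ⁅⁅x, g⁆, g⁆
        rw [← hw]
        simp only [commutatorElement_def, mul_inv_rev, inv_inv]
        group
      · have hk1 : 1 ≤ k := by omega
        obtain ⟨heq, hG⟩ := ih hk1
        refine ⟨?_, Subgroup.commutator_mem_commutator (Subgroup.mem_top _) (Subgroup.mem_top g)⟩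
        show ⁅commIter g⁻¹ (g * w) k, g * w⁆ = ⁅commIter x g (k + 1), g⁆
        rw [heq]
        set v := commIter x g (k + 1) with hv
        have hcomm2 : w * v⁻¹ = v⁻¹ * w := by
          calc w * v⁻¹ = v⁻¹ * (v * w) * v⁻¹ := by group
            _ = v⁻¹ * (w * v) * v⁻¹ := by rw [hmet v hG w hwG]
            _ = v⁻¹ * w := by group
        simp only [commutatorElement_def, mul_inv_rev, mul_assoc]
        congr 2
        rw [← mul_assoc w, hcomm2, mul_assoc]
        congr 1
        rw [← mul_assoc, mul_inv_cancel, one_mul]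
  refine ⟨m₀ + 1, by omega, fun n hn => ?_⟩
  obtain ⟨m, rfl⟩ : ∃ m, n = m + 1 := ⟨n - 1, by omega⟩
  rw [← (key m (by omega)).1]
  exact hmem m (by omega)
end
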